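/- arXiv:2510.03850 — 3 statements merged into one kernel-verified Lean document; each statement's English description precedes it below -/
import Mathlib

section
/- Let μ, r̂ > 0 and 0 < α < 1, and let f be the α-μ density with parameters α, μ, r̂. Then for every real s > 0, the Laplace transform of f satisfies ∫_0^∞ exp(−s·x)·f(x) dx = (α·μ^μ/(Γ(μ)·(r̂·s)^{αμ})) · ∑_{i=0}^∞ Γ(α(i+μ)) · (−μ·(r̂·s)^{−α})^i / i!, the series on the right-hand side converging absolutely. -/
open MeasureTheory Real Filter Topology

/-- Log-convexity consequence: `Γ(x+α) ≤ Γ(x) * x^α` for `0 < α < 1`. -/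
lemma gamma_add_alpha_le {x α : ℝ} (hx : 0 < x) (hα0 : 0 < α) (hα1 : α < 1) :
    Real.Gamma (x + α) ≤ Real.Gamma x * x ^ α := by
  have hΓ : 0 < Real.Gamma x := Real.Gamma_pos_of_pos hx
  have h := Real.Gamma_mul_add_mul_le_rpow_Gamma_mul_rpow_Gamma hx
    (by linarith : (0:ℝ) < x + 1) (by linarith : (0:ℝ) < 1 - α) hα0 (by ring)
  rw [show (1 - α) * x + α * (x + 1) = x + α by ring] at h
  calc Real.Gamma (x + α) ≤ Real.Gamma x ^ (1 - α) * Real.Gamma (x + 1) ^ α := h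
    _ = Real.Gamma x * x ^ α := by
        rw [Real.Gamma_add_one hx.ne', Real.mul_rpow hx.le hΓ.le,
          show Real.Gamma x ^ (1-α) * (x ^ α * Real.Gamma x ^ α)
            = (Real.Gamma x ^ (1-α) * Real.Gamma x ^ α) * x ^ α from by ring,
          ← Real.rpow_add hΓ, show (1:ℝ) - α + α = 1 by ring, Real.rpow_one]

/-- Ratio-test summability of `Γ(α(i+μ)) t^i / i!` for `0 < α < 1`. -/
lemma summable_gamma_mul_pow {α μ t : ℝ} (hμ : 0 < μ) (hα0 : 0 < α) (hα1 : α < 1)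
    (ht : 0 < t) :
    Summable (fun i : ℕ => Real.Gamma (α * ((i : ℝ) + μ)) * t ^ i / (Nat.factorial i : ℝ)) := by
  have hfpos : ∀ n : ℕ,
      0 < Real.Gamma (α * ((n : ℝ) + μ)) * t ^ n / (Nat.factorial n : ℝ) := by
    intro n
    have hΓ : 0 < Real.Gamma (α * ((n : ℝ) + μ)) :=
      Real.Gamma_pos_of_pos (by positivity)
    positivity
  have htend : Tendsto (fun n : ℕ => t * (α * ((n:ℝ) + μ)) ^ α / ((n:ℝ) + 1)) atTop (𝓝 0) := by
    apply squeeze_zero (g := fun n : ℕ => (t * (1 + μ)) * ((n:ℝ) + μ) ^ (-(1 - α)))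
      (fun n => by positivity)
    · intro n
      have hnμ : (0:ℝ) < (n:ℝ) + μ := by positivity
      have h2 : ((n:ℝ) + μ) ^ α = ((n:ℝ) + μ) ^ (-(1 - α)) * ((n:ℝ) + μ) := by
        have h := Real.rpow_add_one hnμ.ne' (-(1 - α))
        rw [show -(1 - α) + 1 = α by ring] at h
        exact h
      have hrp : 0 ≤ ((n:ℝ) + μ) ^ (-(1 - α)) := Real.rpow_nonneg hnμ.le _
      calc t * (α * ((n:ℝ) + μ)) ^ α / ((n:ℝ) + 1)
          ≤ t * (((n:ℝ) + μ) ^ (-(1 - α)) * ((n:ℝ) + μ)) / ((n:ℝ) + 1) := by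
            gcongr
            rw [← h2]
            exact Real.rpow_le_rpow (by positivity) (by nlinarith) hα0.le
        _ = (t * ((n:ℝ) + μ) ^ (-(1 - α))) * (((n:ℝ) + μ) / ((n:ℝ) + 1)) := by ring
        _ ≤ (t * ((n:ℝ) + μ) ^ (-(1 - α))) * (1 + μ) := by
            apply mul_le_mul_of_nonneg_left _ (by positivity)
            rw [div_le_iff₀ (by positivity)]
            nlinarith [Nat.cast_nonneg (α := ℝ) n]
        _ = (t * (1 + μ)) * ((n:ℝ) + μ) ^ (-(1 - α)) := by ring
    · have h0 : Tendsto (fun n : ℕ => ((n:ℝ) + μ) ^ (-(1 - α))) atTop (𝓝 0) :=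
        (tendsto_rpow_neg_atTop (by linarith)).comp
          (tendsto_atTop_add_const_right _ μ tendsto_natCast_atTop_atTop)
      simpa using h0.const_mul (t * (1 + μ))
  have hev : ∀ᶠ n : ℕ in atTop, t * (α * ((n:ℝ) + μ)) ^ α / ((n:ℝ) + 1) ≤ 1/2 := by
    filter_upwards [htend.eventually_lt_const (by norm_num : (0:ℝ) < 1/2)] with n hn
    exact hn.le
  apply summable_of_ratio_norm_eventually_le (r := 1/2) (by norm_num)
  filter_upwards [hev] with n hn
  rw [Real.norm_eq_abs, Real.norm_eq_abs, abs_of_pos (hfpos _), abs_of_pos (hfpos _)]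
  have hx : 0 < α * ((n:ℝ) + μ) := by positivity
  have hcast : α * (((n+1 : ℕ) : ℝ) + μ) = α * ((n:ℝ) + μ) + α := by push_cast; ring
  have hfac : ((Nat.factorial (n+1) : ℕ) : ℝ) = ((n:ℝ) + 1) * (Nat.factorial n : ℝ) := by
    push_cast [Nat.factorial_succ]; ring
  have hΓ : 0 < Real.Gamma (α * ((n:ℝ) + μ)) := Real.Gamma_pos_of_pos hx
  calc Real.Gamma (α * (((n+1 : ℕ) : ℝ) + μ)) * t ^ (n+1) / ((Nat.factorial (n+1) : ℕ) : ℝ)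
      = Real.Gamma (α * ((n:ℝ) + μ) + α) * t ^ (n+1) / (((n:ℝ) + 1) * (Nat.factorial n : ℝ)) := by
        rw [hcast, hfac]
    _ ≤ (Real.Gamma (α * ((n:ℝ) + μ)) * (α * ((n:ℝ) + μ)) ^ α) * t ^ (n+1) /
          (((n:ℝ) + 1) * (Nat.factorial n : ℝ)) := by
        gcongr
        exact gamma_add_alpha_le hx hα0 hα1
    _ = (t * (α * ((n:ℝ) + μ)) ^ α / ((n:ℝ) + 1)) *
          (Real.Gamma (α * ((n:ℝ) + μ)) * t ^ n / (Nat.factorial n : ℝ)) := by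
        have hne1 : ((n:ℝ) + 1) ≠ 0 := by positivity
        have hne2 : (Nat.factorial n : ℝ) ≠ 0 := by positivity
        rw [pow_succ]
        field_simp
    _ ≤ 1/2 * (Real.Gamma (α * ((n:ℝ) + μ)) * t ^ n / (Nat.factorial n : ℝ)) := by
        apply mul_le_mul_of_nonneg_right hn (hfpos n).le

/-- The α-μ probability density with parameters `α`, `μ`, `rh` (= r̂). -/
noncomputable def alphaMuPDF (α μ rh : ℝ) (x : ℝ) : ℝ :=
  if 0 < x then
    α * μ ^ μ * x ^ (α * μ - 1) * Real.exp (-(μ * (x / rh) ^ α)) /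
      (Real.Gamma μ * rh ^ (α * μ))
  else 0

/-- Series expansion of the Laplace transform of the α-μ density, for `0 < α < 1`. -/
theorem laplace_alphaMuPDF
    (α μ rh : ℝ) (hμ : 0 < μ) (hrh : 0 < rh) (hα0 : 0 < α) (hα1 : α < 1)
    (s : ℝ) (hs : 0 < s) :
    Summable (fun i : ℕ =>
      |Real.Gamma (α * ((i : ℝ) + μ)) * (-μ * (rh * s) ^ (-α)) ^ i / (Nat.factorial i : ℝ)|) ∧
    ∫ x in Set.Ioi (0 : ℝ), Real.exp (-(s * x)) * alphaMuPDF α μ rh x =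
      (α * μ ^ μ / (Real.Gamma μ * (rh * s) ^ (α * μ))) *
        ∑' i : ℕ,
          Real.Gamma (α * ((i : ℝ) + μ)) * (-μ * (rh * s) ^ (-α)) ^ i / (Nat.factorial i : ℝ) := by
  have hΓμ : 0 < Real.Gamma μ := Real.Gamma_pos_of_pos hμ
  have hrs : 0 < rh * s := mul_pos hrh hs
  set t : ℝ := μ * (rh * s) ^ (-α) with ht_def
  have ht : 0 < t := mul_pos hμ (Real.rpow_pos_of_pos hrs _)
  have hβ : ∀ i : ℕ, 0 < α * ((i : ℝ) + μ) := fun i => by positivity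
  have habs : ∀ i : ℕ,
      |Real.Gamma (α * ((i : ℝ) + μ)) * (-μ * (rh * s) ^ (-α)) ^ i / (Nat.factorial i : ℝ)|
        = Real.Gamma (α * ((i : ℝ) + μ)) * t ^ i / (Nat.factorial i : ℝ) := by
    intro i
    have hΓ : 0 < Real.Gamma (α * ((i : ℝ) + μ)) := Real.Gamma_pos_of_pos (hβ i)
    rw [show -μ * (rh * s) ^ (-α) = -t from by rw [ht_def]; ring]
    rw [abs_div, abs_mul, abs_pow, abs_neg, abs_of_pos hΓ, abs_of_pos ht,
      abs_of_pos (by positivity : (0:ℝ) < (Nat.factorial i : ℝ))]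
  have hsum0 := summable_gamma_mul_pow (α := α) (μ := μ) hμ hα0 hα1 ht
  have hsum1 : Summable (fun i : ℕ =>
      |Real.Gamma (α * ((i : ℝ) + μ)) * (-μ * (rh * s) ^ (-α)) ^ i / (Nat.factorial i : ℝ)|) :=
    hsum0.congr fun i => (habs i).symm
  refine ⟨hsum1, ?_⟩
  -- constants
  set C : ℝ := α * μ ^ μ / (Real.Gamma μ * rh ^ (α * μ)) with hC_def
  set D : ℝ := α * μ ^ μ / (Real.Gamma μ * (rh * s) ^ (α * μ)) with hD_def
  set F : ℕ → ℝ → ℝ := fun i x =>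
    (C * (-(μ * rh ^ (-α))) ^ i / (Nat.factorial i : ℝ)) *
      (x ^ (α * ((i : ℝ) + μ) - 1) * Real.exp (-(s * x))) with hF_def
  have hbase : ∀ i : ℕ, IntegrableOn
      (fun x : ℝ => x ^ (α * ((i : ℝ) + μ) - 1) * Real.exp (-(s * x))) (Set.Ioi 0) := by
    intro i
    have := integrableOn_rpow_mul_exp_neg_mul_rpow (p := 1) (s := α * ((i : ℝ) + μ) - 1)
      (b := s) (by linarith [hβ i]) one_pos hs
    simpa [Real.rpow_one, neg_mul] using this
  have hInt : ∀ i : ℕ, IntegrableOn (F i) (Set.Ioi 0) := fun i =>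
    (hbase i).const_mul _
  -- value of each integral
  have hIval : ∀ i : ℕ, ∫ x in Set.Ioi (0:ℝ), F i x
      = (C * (-(μ * rh ^ (-α))) ^ i / (Nat.factorial i : ℝ)) *
          ((1 / s) ^ (α * ((i : ℝ) + μ)) * Real.Gamma (α * ((i : ℝ) + μ))) := by
    intro i
    rw [hF_def]
    rw [MeasureTheory.integral_const_mul, Real.integral_rpow_mul_exp_neg_mul_Ioi (hβ i) hs]
  -- key algebraic identity
  have e2 : (rh * s) ^ (-α) = rh ^ (-α) * s ^ (-α) := Real.mul_rpow hrh.le hs.le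
  have e1 : (rh * s) ^ (α * μ) = rh ^ (α * μ) * s ^ (α * μ) := Real.mul_rpow hrh.le hs.le
  have key : ∀ i : ℕ,
      (C * (-(μ * rh ^ (-α))) ^ i / (Nat.factorial i : ℝ)) *
          ((1 / s) ^ (α * ((i : ℝ) + μ)) * Real.Gamma (α * ((i : ℝ) + μ)))
        = D * (Real.Gamma (α * ((i : ℝ) + μ)) * (-μ * (rh * s) ^ (-α)) ^ i /
            (Nat.factorial i : ℝ)) := by
    intro i
    have e3 : (1 / s) ^ (α * ((i : ℝ) + μ)) = (s ^ (-α)) ^ i * (s ^ (α * μ))⁻¹ := by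
      rw [one_div, ← Real.rpow_neg_one s, ← Real.rpow_mul hs.le,
        show (-1 : ℝ) * (α * ((i : ℝ) + μ)) = (-α) * (i : ℝ) + -(α * μ) by ring,
        Real.rpow_add hs, Real.rpow_mul hs.le, Real.rpow_natCast, Real.rpow_neg hs.le (α * μ)]
    have e5 : (-(μ * rh ^ (-α))) ^ i * (s ^ (-α)) ^ i = (-μ * (rh * s) ^ (-α)) ^ i := by
      rw [← mul_pow, show (-(μ * rh ^ (-α))) * s ^ (-α) = -μ * (rh ^ (-α) * s ^ (-α)) by ring,
        ← e2]
    have eCD : C * (s ^ (α * μ))⁻¹ = D := by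
      rw [hC_def, hD_def, e1]
      have h1 : Real.Gamma μ ≠ 0 := hΓμ.ne'
      have h2 : rh ^ (α * μ) ≠ 0 := (Real.rpow_pos_of_pos hrh _).ne'
      have h3 : s ^ (α * μ) ≠ 0 := (Real.rpow_pos_of_pos hs _).ne'
      field_simp
    calc (C * (-(μ * rh ^ (-α))) ^ i / (Nat.factorial i : ℝ)) *
            ((1 / s) ^ (α * ((i : ℝ) + μ)) * Real.Gamma (α * ((i : ℝ) + μ)))
        = (C * (s ^ (α * μ))⁻¹) * (Real.Gamma (α * ((i : ℝ) + μ)) *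
            ((-(μ * rh ^ (-α))) ^ i * (s ^ (-α)) ^ i) / (Nat.factorial i : ℝ)) := by
          rw [e3]; ring
      _ = D * (Real.Gamma (α * ((i : ℝ) + μ)) * (-μ * (rh * s) ^ (-α)) ^ i /
            (Nat.factorial i : ℝ)) := by rw [e5, eCD]
  -- norm integrals
  have hNorm : ∀ i : ℕ, ∫ x in Set.Ioi (0:ℝ), ‖F i x‖
      = |C * (-(μ * rh ^ (-α))) ^ i / (Nat.factorial i : ℝ)| *
          ((1 / s) ^ (α * ((i : ℝ) + μ)) * Real.Gamma (α * ((i : ℝ) + μ))) := by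
    intro i
    have hcongr : ∀ x ∈ Set.Ioi (0:ℝ), ‖F i x‖
        = |C * (-(μ * rh ^ (-α))) ^ i / (Nat.factorial i : ℝ)| *
            (x ^ (α * ((i : ℝ) + μ) - 1) * Real.exp (-(s * x))) := by
      intro x hx
      have hx' : (0:ℝ) < x := hx
      rw [hF_def, Real.norm_eq_abs, abs_mul]
      congr 1
      exact abs_of_pos (by positivity)
    rw [setIntegral_congr_fun measurableSet_Ioi hcongr, MeasureTheory.integral_const_mul,
      Real.integral_rpow_mul_exp_neg_mul_Ioi (hβ i) hs]
  have hSumNorm : Summable fun i : ℕ => ∫ x in Set.Ioi (0:ℝ), ‖F i x‖ := by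
    apply ((hsum1.mul_left |D|).congr)
    intro i
    have hpos : 0 ≤ (1 / s) ^ (α * ((i : ℝ) + μ)) * Real.Gamma (α * ((i : ℝ) + μ)) := by
      have := Real.Gamma_pos_of_pos (hβ i)
      positivity
    calc |D| * |Real.Gamma (α * ((i : ℝ) + μ)) * (-μ * (rh * s) ^ (-α)) ^ i /
            (Nat.factorial i : ℝ)|
        = |D * (Real.Gamma (α * ((i : ℝ) + μ)) * (-μ * (rh * s) ^ (-α)) ^ i /
            (Nat.factorial i : ℝ))| := (abs_mul _ _).symm
      _ = |(C * (-(μ * rh ^ (-α))) ^ i / (Nat.factorial i : ℝ)) *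
            ((1 / s) ^ (α * ((i : ℝ) + μ)) * Real.Gamma (α * ((i : ℝ) + μ)))| := by
          rw [key i]
      _ = |C * (-(μ * rh ^ (-α))) ^ i / (Nat.factorial i : ℝ)| *
            ((1 / s) ^ (α * ((i : ℝ) + μ)) * Real.Gamma (α * ((i : ℝ) + μ))) := by
          rw [abs_mul, abs_of_nonneg hpos]
      _ = ∫ x in Set.Ioi (0:ℝ), ‖F i x‖ := (hNorm i).symm
  -- pointwise identity
  have hpt : ∀ x ∈ Set.Ioi (0:ℝ),
      Real.exp (-(s * x)) * alphaMuPDF α μ rh x = ∑' i : ℕ, F i x := by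
    intro x hx
    have hx' : (0:ℝ) < x := hx
    have h1 : ∀ i : ℕ, F i x = (C * x ^ (α * μ - 1) * Real.exp (-(s * x))) *
        ((-(μ * rh ^ (-α)) * x ^ α) ^ i / (Nat.factorial i : ℝ)) := by
      intro i
      have hx1 : x ^ (α * ((i : ℝ) + μ) - 1) = x ^ (α * μ - 1) * (x ^ α) ^ i := by
        rw [← Real.rpow_natCast (x ^ α) i, ← Real.rpow_mul hx'.le, ← Real.rpow_add hx']
        ring_nf
      rw [hF_def]
      simp only
      rw [hx1, mul_pow]
      ring
    rw [tsum_congr h1, tsum_mul_left]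
    have hexp : ∑' i : ℕ, (-(μ * rh ^ (-α)) * x ^ α) ^ i / (Nat.factorial i : ℝ)
        = Real.exp (-(μ * rh ^ (-α)) * x ^ α) := by
      rw [Real.exp_eq_exp_ℝ, NormedSpace.exp_eq_tsum_div]
    rw [hexp, show -(μ * rh ^ (-α)) * x ^ α = -(μ * (x / rh) ^ α) from by
      rw [Real.div_rpow hx'.le hrh.le, Real.rpow_neg hrh.le]; ring]
    rw [alphaMuPDF, if_pos hx', hC_def]
    ring
  -- put it together
  calc ∫ x in Set.Ioi (0:ℝ), Real.exp (-(s * x)) * alphaMuPDF α μ rh x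
      = ∫ x in Set.Ioi (0:ℝ), ∑' i : ℕ, F i x :=
        setIntegral_congr_fun measurableSet_Ioi hpt
    _ = ∑' i : ℕ, ∫ x in Set.Ioi (0:ℝ), F i x :=
        (integral_tsum_of_summable_integral_norm hInt hSumNorm).symm
    _ = ∑' i : ℕ, D * (Real.Gamma (α * ((i : ℝ) + μ)) * (-μ * (rh * s) ^ (-α)) ^ i /
          (Nat.factorial i : ℝ)) := tsum_congr fun i => (hIval i).trans (key i)
    _ = D * ∑' i : ℕ, Real.Gamma (α * ((i : ℝ) + μ)) * (-μ * (rh * s) ^ (-α)) ^ i /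
          (Nat.factorial i : ℝ) := tsum_mul_left
end

section
/- Let α, μ, r̂ > 0 and let L ≥ 1 be an integer. Then for every r > 0 the series ∑_{i=0}^∞ δ_i · r^{αi + αμL − 1} / Γ(αi + αμL) converges absolutely, i.e., ∑_{i=0}^∞ |δ_i| · r^{αi + αμL − 1} / Γ(αi + αμL) < ∞. -/
open MeasureTheory Real
open Set

/-- Slope comparison for log Gamma. -/
lemma logGamma_slope {a b c d : ℝ} (ha : 0 < a) (hac : a ≤ c) (hab : a < b)
    (hcd : c < d) (hbd : b ≤ d) :
    (log (Gamma b) - log (Gamma a)) / (b - a) ≤ (log (Gamma d) - log (Gamma c)) / (d - c) := by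
  have ha' : a ∈ Ioi (0:ℝ) := ha
  have hb' : b ∈ Ioi (0:ℝ) := lt_trans ha hab
  have hc' : c ∈ Ioi (0:ℝ) := lt_of_lt_of_le ha hac
  have hd' : d ∈ Ioi (0:ℝ) := lt_trans hc' hcd
  have h1 := Real.convexOn_log_Gamma.secant_mono ha' hb' hd' (ne_of_gt hab) (ne_of_gt (lt_of_le_of_lt hac hcd)) hbd
  have h2 := Real.convexOn_log_Gamma.secant_mono hd' ha' hc' (ne_of_lt (lt_of_le_of_lt hac hcd)) (ne_of_lt hcd) hac
  simp only [Function.comp] at h1 h2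
  have e1 : (log (Gamma a) - log (Gamma d)) / (a - d) = (log (Gamma d) - log (Gamma a)) / (d - a) := by
    rw [← neg_div_neg_eq]; ring_nf
  have e2 : (log (Gamma c) - log (Gamma d)) / (c - d) = (log (Gamma d) - log (Gamma c)) / (d - c) := by
    rw [← neg_div_neg_eq]; ring_nf
  rw [e1, e2] at h2
  exact le_trans h1 h2


lemma logGamma_succ {z : ℝ} (hz : 0 < z) : log (Gamma (z + 1)) = log z + log (Gamma z) := by
  rw [Real.Gamma_add_one (ne_of_gt hz), Real.log_mul (ne_of_gt hz) (ne_of_gt (Real.Gamma_pos_of_pos hz))]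

/-- Upper step: `Γ(w+s) ≤ Γ(w) * (w+s)^s`. -/
lemma Gamma_step_upper {w s : ℝ} (hw : 0 < w) (hs : 0 < s) :
    Gamma (w + s) ≤ Gamma w * (w + s) ^ s := by
  have hws : 0 < w + s := by linarith
  have h := logGamma_slope hw (by linarith : w ≤ w + s) (by linarith : w < w + s)
      (by linarith : w + s < w + s + 1) (by linarith : w + s ≤ w + s + 1)
  rw [logGamma_succ hws] at h
  have h2 : log (Gamma (w + s)) ≤ log (Gamma w) + log (w + s) * s := by
    have hs' : (0:ℝ) < s := hs
    have : (log (Gamma (w + s)) - log (Gamma w)) / s ≤ log (w + s) := by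
      have e : (log (w+s) + log (Gamma (w+s)) - log (Gamma (w+s))) / (w + s + 1 - (w + s)) = log (w+s) := by
        field_simp
        ring
      rw [e] at h; convert h using 2; ring
    calc log (Gamma (w + s)) = log (Gamma w) + ((log (Gamma (w + s)) - log (Gamma w)) / s) * s := by
            field_simp
            ring
      _ ≤ log (Gamma w) + log (w + s) * s := by nlinarith [this]
  calc Gamma (w + s) = exp (log (Gamma (w + s))) := (Real.exp_log (Real.Gamma_pos_of_pos hws)).symm
    _ ≤ exp (log (Gamma w) + log (w + s) * s) := Real.exp_le_exp.mpr h2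
    _ = Gamma w * (w + s) ^ s := by
        rw [Real.exp_add, Real.exp_log (Real.Gamma_pos_of_pos hw), Real.rpow_def_of_pos hws]

/-- Lower step, `s ≥ 1`: `Γ(z+s) ≥ Γ(z) * z^s`. -/
lemma Gamma_step_lower_ge_one {z s : ℝ} (hz : 0 < z) (hs : 1 ≤ s) :
    Gamma z * z ^ s ≤ Gamma (z + s) := by
  have h := logGamma_slope hz (le_refl z) (by linarith : z < z + 1)
      (by linarith : z < z + s) (by linarith : z + 1 ≤ z + s)
  rw [logGamma_succ hz] at h
  have hs0 : (0:ℝ) < s := by linarith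
  have h2 : log (Gamma z) + log z * s ≤ log (Gamma (z + s)) := by
    have e : (log z + log (Gamma z) - log (Gamma z)) / (z + 1 - z) = log z := by field_simp; ring
    rw [e] at h
    have e2 : z + s - z = s := by ring
    rw [e2] at h
    have := (le_div_iff₀ hs0).mp h
    linarith
  calc Gamma z * z ^ s = exp (log (Gamma z) + log z * s) := by
        rw [Real.exp_add, Real.exp_log (Real.Gamma_pos_of_pos hz), Real.rpow_def_of_pos hz]
    _ ≤ Gamma (z + s) := by
        rw [← Real.exp_log (Real.Gamma_pos_of_pos (by linarith : (0:ℝ) < z + s))]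
        exact Real.exp_le_exp.mpr h2

/-- Lower step, `0 < s < 1`: `Γ(z+s) ≥ Γ(z) * z * (z+1)^(s-1)`. -/
lemma Gamma_step_lower_lt_one {z s : ℝ} (hz : 0 < z) (hs0 : 0 < s) (hs : s < 1) :
    Gamma z * z * (z + 1) ^ (s - 1) ≤ Gamma (z + s) := by
  have h := logGamma_slope (by linarith : (0:ℝ) < z + s) (by linarith : z + s ≤ z + 1)
      (by linarith : z + s < z + 1) (by linarith : z + 1 < z + 2) (by linarith : z + 1 ≤ z + 2)
  have e1 : log (Gamma (z+1)) = log z + log (Gamma z) := logGamma_succ hz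
  have e2 : log (Gamma (z+2)) = log (z+1) + log (Gamma (z+1)) := by
    have := logGamma_succ (by linarith : (0:ℝ) < z + 1)
    rw [show z + 1 + 1 = z + 2 by ring] at this; exact this
  rw [e2] at h
  have e3 : (log (z+1) + log (Gamma (z+1)) - log (Gamma (z+1))) / (z + 2 - (z+1)) = log (z+1) := by
    field_simp; ring
  rw [e3] at h
  have h1s : (0:ℝ) < z + 1 - (z + s) := by linarith
  have h2 : log (Gamma (z+1)) - log (Gamma (z+s)) ≤ (1 - s) * log (z+1) := by
    have := (div_le_iff₀ h1s).mp h
    nlinarith [this]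
  have h3 : log (Gamma z) + log z + log (z+1) * (s - 1) ≤ log (Gamma (z + s)) := by
    rw [e1] at h2; nlinarith [h2]
  calc Gamma z * z * (z + 1) ^ (s - 1)
      = exp (log (Gamma z) + log z + log (z+1) * (s-1)) := by
        rw [Real.exp_add, Real.exp_add, Real.exp_log (Real.Gamma_pos_of_pos hz),
          Real.exp_log hz, Real.rpow_def_of_pos (by linarith : (0:ℝ) < z + 1)]
    _ ≤ Gamma (z + s) := by
        rw [← Real.exp_log (Real.Gamma_pos_of_pos (by linarith : (0:ℝ) < z + s))]
        exact Real.exp_le_exp.mpr h3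

/-- Combined lower step with uniform constant `m/(m+1)`. -/
lemma Gamma_step_lower {m α z : ℝ} (hm : 0 < m) (hα : 0 < α) (hz : m ≤ z) :
    m / (m+1) * (Gamma z * z ^ α) ≤ Gamma (z + α) := by
  have hz0 : 0 < z := lt_of_lt_of_le hm hz
  have hc0 : m / (m+1) ≤ 1 := by
    rw [div_le_one (by linarith)]; linarith
  have hG : 0 < Gamma z := Real.Gamma_pos_of_pos hz0
  have hzp : 0 < z ^ α := Real.rpow_pos_of_pos hz0 α
  rcases le_or_gt 1 α with h1 | h1
  · calc m / (m+1) * (Gamma z * z ^ α) ≤ 1 * (Gamma z * z ^ α) := by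
          apply mul_le_mul_of_nonneg_right hc0; positivity
      _ = Gamma z * z ^ α := one_mul _
      _ ≤ Gamma (z + α) := Gamma_step_lower_ge_one hz0 h1
  · -- z * (z+1)^(α-1) ≥ (m/(m+1)) * z^α
    have key : m / (m+1) * z ^ α ≤ z * (z + 1) ^ (α - 1) := by
      have ht0 : 0 < z / (z+1) := by positivity
      have ht1 : z / (z+1) ≤ 1 := by
        rw [div_le_one (by linarith)]; linarith
      have hmono : (z/(z+1)) ^ (1:ℝ) ≤ (z/(z+1)) ^ (1 - α) := by
        apply Real.rpow_le_rpow_of_exponent_ge ht0 ht1; linarith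
      rw [Real.rpow_one] at hmono
      have hmz : m / (m+1) ≤ z / (z+1) := by
        rw [div_le_div_iff₀ (by linarith) (by linarith)]; nlinarith
      have e : z * (z + 1) ^ (α - 1) = z ^ α * (z/(z+1)) ^ (1-α) := by
        have hz1 : (0:ℝ) < (z+1) ^ (1-α) := Real.rpow_pos_of_pos (by linarith) _
        rw [Real.div_rpow (le_of_lt hz0) (by linarith : (0:ℝ) ≤ z + 1),
          show (α:ℝ) - 1 = -(1-α) by ring, Real.rpow_neg (by linarith : (0:ℝ) ≤ z+1)]
        have hzz : z ^ α * z ^ (1-α) = z := by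
          rw [← Real.rpow_add hz0]; norm_num
        rw [div_eq_mul_inv, ← mul_assoc, hzz]
      rw [e]
      calc m / (m+1) * z ^ α ≤ z/(z+1) * z ^ α := by
            apply mul_le_mul_of_nonneg_right hmz (le_of_lt hzp)
        _ ≤ z ^ α * (z/(z+1)) ^ (1-α) := by
            rw [mul_comm]
            apply mul_le_mul_of_nonneg_left hmono (le_of_lt hzp)
    calc m / (m+1) * (Gamma z * z ^ α) = Gamma z * (m/(m+1) * z ^ α) := by ring
      _ ≤ Gamma z * (z * (z+1) ^ (α - 1)) := mul_le_mul_of_nonneg_left key (le_of_lt hG)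
      _ = Gamma z * z * (z+1) ^ (α-1) := by ring
      _ ≤ Gamma (z + α) := Gamma_step_lower_lt_one hz0 hα h1

/-- Telescoped lower bound. -/
lemma Gamma_prod_lower {m α : ℝ} (hm : 0 < m) (hα : 0 < α) :
    ∀ (l : ℕ) (z : ℝ), m ≤ z →
      (m/(m+1))^l * Gamma z * ∏ j ∈ Finset.range l, (z + α*j) ^ α ≤ Gamma (z + α*l) := by
  intro l
  induction l with
  | zero => intro z hz; simp
  | succ l ih =>
    intro z hz
    have hz0 : 0 < z := lt_of_lt_of_le hm hz
    have hzl : m ≤ z + α*l := by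
      have h0 : (0:ℝ) ≤ α*l := by positivity
      linarith
    have hzl0 : 0 < z + α*l := lt_of_lt_of_le hm hzl
    have step := Gamma_step_lower hm hα hzl
    have ihz := ih z hz
    have hprodpos : (0:ℝ) < ∏ j ∈ Finset.range l, (z + α*j) ^ α := by
      apply Finset.prod_pos; intro j hj
      have : (0:ℝ) ≤ α * j := by positivity
      exact Real.rpow_pos_of_pos (by linarith) α
    have hc0 : (0:ℝ) < m/(m+1) := by positivity
    calc (m/(m+1))^(l+1) * Gamma z * ∏ j ∈ Finset.range (l+1), (z + α*j) ^ α
        = (m/(m+1)) * (((m/(m+1))^l * Gamma z * ∏ j ∈ Finset.range l, (z + α*j) ^ α)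
            * (z + α*l) ^ α) := by
          rw [Finset.prod_range_succ]; push_cast; ring
      _ ≤ (m/(m+1)) * (Gamma (z + α*l) * (z + α*l) ^ α) := by
          apply mul_le_mul_of_nonneg_left _ (le_of_lt hc0)
          apply mul_le_mul_of_nonneg_right ihz
          exact le_of_lt (Real.rpow_pos_of_pos hzl0 α)
      _ ≤ Gamma ((z + α*l) + α) := step
      _ = Gamma (z + α*(l+1:ℕ)) := by congr 1; push_cast; ring

/-- Telescoped upper bound. -/
lemma Gamma_prod_upper {m α : ℝ} (hm : 0 < m) (hα : 0 < α) :
    ∀ (l : ℕ), Gamma (m + α*l) ≤ Gamma m * ∏ j ∈ Finset.range l, (m + α*(j+1)) ^ α := by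
  intro l
  induction l with
  | zero => simp
  | succ l ih =>
    have hml : 0 < m + α*l := by positivity
    have step := Gamma_step_upper hml hα
    calc Gamma (m + α*(l+1:ℕ)) = Gamma ((m + α*l) + α) := by congr 1; push_cast; ring
      _ ≤ Gamma (m + α*l) * (m + α*l + α) ^ α := step
      _ ≤ (Gamma m * ∏ j ∈ Finset.range l, (m + α*(j+1)) ^ α) * (m + α*l + α) ^ α := by
          apply mul_le_mul_of_nonneg_right ih
          have h0 : (0:ℝ) < m + α*l + α := by positivity
          exact le_of_lt (Real.rpow_pos_of_pos h0 α)
      _ = Gamma m * ∏ j ∈ Finset.range (l+1), (m + α*(j+1)) ^ α := by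
          rw [Finset.prod_range_succ, show m + α*(((l:ℕ):ℝ)+1) = m + α*(l:ℕ) + α by push_cast; ring]
          ring

/-- Factorial ratio as a product. -/
lemma factorial_ratio_prod : ∀ (l n : ℕ), l ≤ n →
    ((n.factorial : ℝ)) = ((n-l).factorial : ℝ) * ∏ j ∈ Finset.range l, (((n-l : ℕ) : ℝ) + 1 + j) := by
  intro l
  induction l with
  | zero => intro n _; simp
  | succ l ih =>
    intro n hln
    have hl1 : l ≤ n := Nat.le_of_succ_le hln
    have e : n - l = (n - (l+1)) + 1 := by omega
    have ihn := ih n hl1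
    have efac : ((n-l).factorial : ℝ) = ((n-(l+1)).factorial : ℝ) * (((n-(l+1) : ℕ) : ℝ) + 1) := by
      rw [e, Nat.factorial_succ]; push_cast; ring
    rw [Finset.prod_range_succ', ihn, efac]
    have hp : ∀ j ∈ Finset.range l, ((n-(l+1):ℕ):ℝ)+1+((j+1:ℕ):ℝ) = ((n-l:ℕ):ℝ)+1+(j:ℝ) := by
      intro j _
      have hc : ((n-l:ℕ):ℝ) = ((n-(l+1):ℕ):ℝ)+1 := by rw [e]; push_cast; ring
      rw [hc]; push_cast; ring
    rw [Finset.prod_congr rfl hp]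
    push_cast
    ring

/-- Per-factor inequality. -/
lemma fct {α μ : ℝ} (hα : 0 < α) (hμ : 0 < μ) (u j : ℝ) (hj : 0 ≤ j) (hju : j ≤ u) :
    (u+1) ^ (min α 1) * (α*μ + α*(j+1)) ^ α
      ≤ ((max (1/(α*μ)) (2/α)) ^ (min α 1) * (1+1/μ) ^ α * (1+α+α*μ)) * ((j+1) * (α*u+α*μ) ^ α) := by
  set m := α*μ with hm
  set β := min α 1 with hβ
  set cp := max (1/m) (2/α) with hcp
  have hm0 : 0 < m := by positivity
  have hu0 : 0 ≤ u := le_trans hj hju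
  have hβ0 : 0 < β := lt_min hα one_pos
  have hβ1 : β ≤ 1 := min_le_right _ _
  have hβα : β ≤ α := min_le_left _ _
  have hcp0 : 0 < cp := lt_of_lt_of_le (by positivity : (0:ℝ) < 1/m) (le_max_left _ _)
  have haum : 0 < α*u+m := by positivity
  have hajm : 0 < α*j+m := by positivity
  -- h1 : u+1 ≤ cp*(α*u+m)
  have h1 : u+1 ≤ cp*(α*u+m) := by
    have e1 : 1/m ≤ cp := le_max_left _ _
    have e2 : 2/α ≤ cp := le_max_right _ _
    have e3 : 1 ≤ cp * m := by rw [div_le_iff₀ hm0] at e1; linarith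
    have e4 : 2*u ≤ cp * (α*u) := by
      rw [div_le_iff₀ hα] at e2
      nlinarith
    nlinarith
  have h2 : (u+1) ^ β ≤ cp ^ β * (α*u+m) ^ β := by
    rw [← Real.mul_rpow (le_of_lt hcp0) (le_of_lt haum)]
    exact Real.rpow_le_rpow (by linarith) h1 (le_of_lt hβ0)
  -- h4 : (m+α*(j+1))^α ≤ ρ^α*(α*j+m)^α
  have h3 : m + α*(j+1) ≤ (1+1/μ)*(α*j+m) := by
    have : m/μ = α := by rw [hm]; field_simp
    have expand : (1+1/μ)*(α*j+m) = (α*j+m) + (α*j)/μ + m/μ := by field_simp; ring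
    rw [expand, this]
    have : 0 ≤ (α*j)/μ := by positivity
    linarith
  have h4 : (α*μ + α*(j+1)) ^ α ≤ (1+1/μ) ^ α * (α*j+m) ^ α := by
    rw [← Real.mul_rpow (by positivity) (le_of_lt hajm)]
    exact Real.rpow_le_rpow (by positivity) h3 (le_of_lt hα)
  -- h7 : (α*j+m)^α ≤ (α*u+m)^(α-β) * ((1+α+m)*(j+1)) ... assembled below
  have h5 : (α*j+m) ^ α = (α*j+m) ^ (α-β) * (α*j+m) ^ β := by
    rw [← Real.rpow_add hajm]; ring_nf
  have h6 : (α*j+m) ^ (α-β) ≤ (α*u+m) ^ (α-β) := by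
    apply Real.rpow_le_rpow (le_of_lt hajm) (by nlinarith) (by linarith)
  have h7 : (α*j+m) ^ β ≤ (1+α+m) * (j+1) := by
    have s1 : α*j+m ≤ (1+α+m)*(j+1) := by nlinarith
    have s2 : (α*j+m) ^ β ≤ ((1+α+m)*(j+1)) ^ β :=
      Real.rpow_le_rpow (le_of_lt hajm) s1 (le_of_lt hβ0)
    have s3 : ((1+α+m)*(j+1)) ^ β ≤ ((1+α+m)*(j+1)) ^ (1:ℝ) := by
      apply Real.rpow_le_rpow_of_exponent_le _ hβ1
      nlinarith
    rw [Real.rpow_one] at s3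
    linarith
  have recomb : (α*u+m) ^ β * (α*u+m) ^ (α-β) = (α*u+m) ^ α := by
    rw [← Real.rpow_add haum]; ring_nf
  calc (u+1) ^ β * (α*μ + α*(j+1)) ^ α
      ≤ (cp ^ β * (α*u+m) ^ β) * ((1+1/μ) ^ α * (α*j+m) ^ α) := by
        apply mul_le_mul h2 h4 (by positivity) (by positivity)
    _ = cp ^ β * (1+1/μ) ^ α * ((α*u+m) ^ β * ((α*j+m) ^ (α-β) * (α*j+m) ^ β)) := by
        rw [← h5]; ring
    _ ≤ cp ^ β * (1+1/μ) ^ α * ((α*u+m) ^ β * ((α*u+m) ^ (α-β) * ((1+α+m) * (j+1)))) := by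
        apply mul_le_mul_of_nonneg_left _ (by positivity)
        apply mul_le_mul_of_nonneg_left _ (by positivity)
        apply mul_le_mul h6 h7 (by positivity) (by positivity)
    _ = (cp ^ β * (1+1/μ) ^ α * (1+α+m)) * ((j+1) * ((α*u+m) ^ β * (α*u+m) ^ (α-β))) := by
        ring
    _ = (cp ^ β * (1+1/μ) ^ α * (1+α+m)) * ((j+1) * (α*u+α*μ) ^ α) := by
        rw [recomb]

/-- The key combinatorial Gamma inequality. -/
lemma key {α μ : ℝ} (hα : 0 < α) (hμ : 0 < μ) (l n : ℕ) (hln : l ≤ n) :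
    ((n.factorial : ℝ)) ^ (min α 1) * (Gamma (α*((n-l : ℕ):ℝ) + α*μ) * Gamma (α*(l:ℝ) + α*μ))
      ≤ Gamma (α*μ) *
        (((max (1/(α*μ)) (2/α)) ^ (min α 1) * (1+1/μ) ^ α * (1+α+α*μ) * ((α*μ+1)/(α*μ)))^l *
        ((l.factorial : ℝ) * (Gamma (α*(n:ℝ) + α*μ) * ((n-l).factorial : ℝ) ^ (min α 1)))) := by
  set m := α*μ with hm
  set β := min α 1 with hβ
  set E := (max (1/(α*μ)) (2/α)) ^ (min α 1) * (1+1/μ) ^ α * (1+α+α*μ) with hE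
  have hm0 : 0 < m := by positivity
  have hβ0 : 0 < β := lt_min hα one_pos
  have hE0 : 0 < E := by
    have : (0:ℝ) < max (1/(α*μ)) (2/α) := lt_of_lt_of_le (by positivity) (le_max_left _ _)
    have h1 : (0:ℝ) < (max (1/(α*μ)) (2/α)) ^ (min α 1) := Real.rpow_pos_of_pos this _
    have h2 : (0:ℝ) < (1+1/μ) ^ α := Real.rpow_pos_of_pos (by positivity) _
    have h3 : (0:ℝ) < 1+α+α*μ := by positivity
    positivity
  set k := n - l with hk
  have hkl : (k:ℝ) + (l:ℝ) = (n:ℝ) := by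
    rw [hk]; push_cast [Nat.cast_sub hln]; ring
  -- F1
  have F1 : ((n.factorial : ℝ)) ^ β
      = ((k.factorial : ℝ)) ^ β * ∏ j ∈ Finset.range l, ((k:ℝ)+1+j) ^ β := by
    rw [factorial_ratio_prod l n hln]
    rw [Real.mul_rpow (by positivity) (Finset.prod_nonneg
      (fun j _ => by positivity))]
    rw [← Real.finset_prod_rpow _ _ (fun j _ => by positivity) β]
  -- F2
  have F2 : Gamma (α*(l:ℝ) + m) ≤ Gamma m * ∏ j ∈ Finset.range l, (m + α*((j:ℝ)+1)) ^ α := by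
    have := Gamma_prod_upper hm0 hα l
    rw [show m + α*(l:ℝ) = α*(l:ℝ) + m by ring] at this
    exact this
  -- F3
  have hzm : m ≤ α*(k:ℝ)+m := by
    have : (0:ℝ) ≤ α*(k:ℝ) := by positivity
    linarith
  have F3 : (m/(m+1))^l * Gamma (α*(k:ℝ)+m) * ∏ j ∈ Finset.range l, ((α*(k:ℝ)+m) + α*(j:ℝ)) ^ α
      ≤ Gamma (α*(n:ℝ) + m) := by
    have := Gamma_prod_lower hm0 hα l (α*(k:ℝ)+m) hzm
    rw [show α*(k:ℝ)+m + α*(l:ℝ) = α*((k:ℝ)+(l:ℝ)) + m by ring, hkl] at this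
    exact this
  -- F4 : product of per-factor inequalities
  have F4 : (∏ j ∈ Finset.range l, ((k:ℝ)+1+j) ^ β) * (∏ j ∈ Finset.range l, (m + α*((j:ℝ)+1)) ^ α)
      ≤ E^l * ((l.factorial : ℝ) * ∏ j ∈ Finset.range l, ((α*(k:ℝ)+m) + α*(j:ℝ)) ^ α) := by
    rw [← Finset.prod_mul_distrib]
    have fct' : ∀ j ∈ Finset.range l,
        ((k:ℝ)+1+j) ^ β * (m + α*((j:ℝ)+1)) ^ α ≤ E * (((j:ℝ)+1) * ((α*(k:ℝ)+m) + α*(j:ℝ)) ^ α) := by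
      intro j _
      have h := fct hα hμ ((k:ℝ)+(j:ℝ)) (j:ℝ) (Nat.cast_nonneg j) (by
        have : (0:ℝ) ≤ (k:ℝ) := Nat.cast_nonneg k
        linarith)
      rw [show (k:ℝ)+(j:ℝ)+1 = (k:ℝ)+1+(j:ℝ) by ring] at h
      rw [show α*((k:ℝ)+(j:ℝ))+α*μ = (α*(k:ℝ)+m) + α*(j:ℝ) by rw [hm]; ring] at h
      exact h
    calc (∏ j ∈ Finset.range l, (((k:ℝ)+1+j) ^ β * (m + α*((j:ℝ)+1)) ^ α))
        ≤ ∏ j ∈ Finset.range l, (E * (((j:ℝ)+1) * ((α*(k:ℝ)+m) + α*(j:ℝ)) ^ α)) := by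
          apply Finset.prod_le_prod _ fct'
          intro j _
          have p1 : (0:ℝ) < ((k:ℝ)+1+j) ^ β := Real.rpow_pos_of_pos (by positivity) _
          have p2 : (0:ℝ) < (m + α*((j:ℝ)+1)) ^ α := Real.rpow_pos_of_pos (by positivity) _
          positivity
      _ = E^l * ∏ j ∈ Finset.range l, (((j:ℝ)+1) * ((α*(k:ℝ)+m) + α*(j:ℝ)) ^ α) := by
          rw [Finset.prod_mul_distrib, Finset.prod_const, Finset.card_range]
      _ = E^l * ((∏ j ∈ Finset.range l, ((j:ℝ)+1)) * ∏ j ∈ Finset.range l, ((α*(k:ℝ)+m) + α*(j:ℝ)) ^ α) := by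
          rw [Finset.prod_mul_distrib]
      _ = E^l * ((l.factorial : ℝ) * ∏ j ∈ Finset.range l, ((α*(k:ℝ)+m) + α*(j:ℝ)) ^ α) := by
          have hfac : ((l.factorial:ℕ):ℝ) = ∏ j ∈ Finset.range l, ((j:ℝ)+1) := by
            rw [← Finset.prod_range_add_one_eq_factorial l]
            push_cast
            rfl
          rw [hfac]
  -- positivity facts
  have hGk : 0 < Gamma (α*(k:ℝ)+m) := Real.Gamma_pos_of_pos (by positivity)
  have hGm : 0 < Gamma m := Real.Gamma_pos_of_pos hm0
  have hGn : 0 < Gamma (α*(n:ℝ)+m) := Real.Gamma_pos_of_pos (by positivity)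
  have hkf : (0:ℝ) < ((k.factorial:ℝ)) ^ β := Real.rpow_pos_of_pos (by positivity) _
  have hC : (0:ℝ) < ∏ j ∈ Finset.range l, ((α*(k:ℝ)+m) + α*(j:ℝ)) ^ α :=
    Finset.prod_pos (fun j _ => Real.rpow_pos_of_pos (by positivity) _)
  have hA : (0:ℝ) ≤ ∏ j ∈ Finset.range l, ((k:ℝ)+1+j) ^ β :=
    le_of_lt (Finset.prod_pos (fun j _ => Real.rpow_pos_of_pos (by positivity) _))
  have hc0 : (0:ℝ) < m/(m+1) := by positivity
  -- combine
  have C1 : ((n.factorial : ℝ)) ^ β * (Gamma (α*((k:ℕ):ℝ) + m) * Gamma (α*(l:ℝ) + m))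
      ≤ ((k.factorial : ℝ)) ^ β * Gamma (α*(k:ℝ)+m) * Gamma m *
        ((∏ j ∈ Finset.range l, ((k:ℝ)+1+j) ^ β) * (∏ j ∈ Finset.range l, (m + α*((j:ℝ)+1)) ^ α)) := by
    rw [F1]
    calc ((k.factorial : ℝ)) ^ β * (∏ j ∈ Finset.range l, ((k:ℝ)+1+j) ^ β) *
          (Gamma (α*(k:ℝ) + m) * Gamma (α*(l:ℝ) + m))
        ≤ ((k.factorial : ℝ)) ^ β * (∏ j ∈ Finset.range l, ((k:ℝ)+1+j) ^ β) *
          (Gamma (α*(k:ℝ) + m) * (Gamma m * ∏ j ∈ Finset.range l, (m + α*((j:ℝ)+1)) ^ α)) := by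
          apply mul_le_mul_of_nonneg_left _ (by positivity)
          exact mul_le_mul_of_nonneg_left F2 (le_of_lt hGk)
      _ = ((k.factorial : ℝ)) ^ β * Gamma (α*(k:ℝ)+m) * Gamma m *
          ((∏ j ∈ Finset.range l, ((k:ℝ)+1+j) ^ β) * (∏ j ∈ Finset.range l, (m + α*((j:ℝ)+1)) ^ α)) := by
          ring
  have C2 : ((k.factorial : ℝ)) ^ β * Gamma (α*(k:ℝ)+m) * Gamma m *
        ((∏ j ∈ Finset.range l, ((k:ℝ)+1+j) ^ β) * (∏ j ∈ Finset.range l, (m + α*((j:ℝ)+1)) ^ α))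
      ≤ ((k.factorial : ℝ)) ^ β * Gamma (α*(k:ℝ)+m) * Gamma m *
        (E^l * ((l.factorial : ℝ) * ∏ j ∈ Finset.range l, ((α*(k:ℝ)+m) + α*(j:ℝ)) ^ α)) := by
    apply mul_le_mul_of_nonneg_left F4 (by positivity)
  have C3 : Gamma (α*(k:ℝ)+m) * ∏ j ∈ Finset.range l, ((α*(k:ℝ)+m) + α*(j:ℝ)) ^ α
      ≤ ((m+1)/m)^l * Gamma (α*(n:ℝ) + m) := by
    have hpow : (0:ℝ) < (m/(m+1))^l := pow_pos hc0 l
    apply le_of_mul_le_mul_left _ hpow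
    calc (m/(m+1))^l * (Gamma (α*(k:ℝ)+m) * ∏ j ∈ Finset.range l, ((α*(k:ℝ)+m) + α*(j:ℝ)) ^ α)
        = (m/(m+1))^l * Gamma (α*(k:ℝ)+m) * ∏ j ∈ Finset.range l, ((α*(k:ℝ)+m) + α*(j:ℝ)) ^ α := by
          ring
      _ ≤ Gamma (α*(n:ℝ) + m) := F3
      _ = (m/(m+1))^l * (((m+1)/m)^l * Gamma (α*(n:ℝ) + m)) := by
          have h1 : (m/(m+1)) * ((m+1)/m) = 1 := by field_simp
          rw [← mul_assoc, ← mul_pow, h1, one_pow, one_mul]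
  -- final combination
  calc ((n.factorial : ℝ)) ^ β * (Gamma (α*((k:ℕ):ℝ) + m) * Gamma (α*(l:ℝ) + m))
      ≤ ((k.factorial : ℝ)) ^ β * Gamma (α*(k:ℝ)+m) * Gamma m *
        ((∏ j ∈ Finset.range l, ((k:ℝ)+1+j) ^ β) * (∏ j ∈ Finset.range l, (m + α*((j:ℝ)+1)) ^ α)) := C1
    _ ≤ ((k.factorial : ℝ)) ^ β * Gamma (α*(k:ℝ)+m) * Gamma m *
        (E^l * ((l.factorial : ℝ) * ∏ j ∈ Finset.range l, ((α*(k:ℝ)+m) + α*(j:ℝ)) ^ α)) := C2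
    _ = Gamma m * (E^l * ((l.factorial : ℝ) * (((k.factorial : ℝ)) ^ β *
        (Gamma (α*(k:ℝ)+m) * ∏ j ∈ Finset.range l, ((α*(k:ℝ)+m) + α*(j:ℝ)) ^ α)))) := by ring
    _ ≤ Gamma m * (E^l * ((l.factorial : ℝ) * (((k.factorial : ℝ)) ^ β *
        (((m+1)/m)^l * Gamma (α*(n:ℝ) + m))))) := by
        apply mul_le_mul_of_nonneg_left _ (le_of_lt hGm)
        apply mul_le_mul_of_nonneg_left _ (le_of_lt (pow_pos hE0 l))
        apply mul_le_mul_of_nonneg_left _ (by positivity)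
        exact mul_le_mul_of_nonneg_left C3 (le_of_lt hkf)
    _ = Gamma m * (E^l * (((m+1)/m)^l *
        ((l.factorial : ℝ) * (Gamma (α*(n:ℝ) + m) * ((k.factorial : ℝ)) ^ β)))) := by
        ring
    _ = Gamma (α*μ) * (((max (1/(α*μ)) (2/α)) ^ (min α 1) * (1+1/μ) ^ α * (1+α+α*μ) * ((α*μ+1)/(α*μ)))^l *
        ((l.factorial : ℝ) * (Gamma (α*(n:ℝ) + α*μ) * (((n-l).factorial : ℝ)) ^ (min α 1)))) := by
        have hQ : (((max (1/(α*μ)) (2/α)) ^ (min α 1) * (1+1/μ) ^ α * (1+α+α*μ)) * ((α*μ+1)/(α*μ)))^l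
            = E^l * (((α*μ+1)/(α*μ)))^l := by
          rw [mul_pow, hE]
        rw [hQ, ← hm, ← hk, ← hβ]
        ring

/-- The recursively defined coefficients δ_i. -/
noncomputable def deltaCoef (α μ rh : ℝ) (L : ℕ) : ℕ → ℝ
  | 0 => Real.Gamma (α * μ) ^ L
  | (i + 1) =>
      (1 / (((i : ℝ) + 1) * Real.Gamma (α * μ))) *
        ∑ l ∈ Finset.range (i + 1),
          deltaCoef α μ rh L (i - l) *
            ((((l : ℝ) + 1) * (L : ℝ) + ((l : ℝ) + 1) - ((i : ℝ) + 1)) *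
              Real.Gamma (α * (((l : ℝ) + 1) + μ)) *
              (-μ * rh ^ (-α)) ^ (l + 1) / (Nat.factorial (l + 1) : ℝ))
  termination_by i => i
  decreasing_by omega

/-- Crude recursion bound. -/
lemma rec_bound {α μ rh : ℝ} {L : ℕ} (hα : 0 < α) (hμ : 0 < μ) (hrh : 0 < rh) (n : ℕ) :
    |deltaCoef α μ rh L (n+1)| ≤ (((L:ℝ)+1) / Gamma (α*μ)) *
      ∑ l ∈ Finset.range (n+1),
        |deltaCoef α μ rh L (n-l)| * Gamma (α*((l:ℝ)+1) + α*μ) * (μ*rh^(-α))^(l+1) /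
          (((l+1).factorial : ℝ)) := by
  have hG : 0 < Gamma (α*μ) := Real.Gamma_pos_of_pos (by positivity)
  have hc : 0 < μ*rh^(-α) := by positivity
  rw [deltaCoef]
  rw [abs_mul]
  have h1 : |1 / (((n : ℝ) + 1) * Gamma (α * μ))| = 1 / (((n : ℝ) + 1) * Gamma (α * μ)) := by
    rw [abs_of_pos]; positivity
  rw [h1]
  calc 1 / (((n : ℝ) + 1) * Gamma (α * μ)) * |∑ l ∈ Finset.range (n + 1),
          deltaCoef α μ rh L (n - l) *
            ((((l : ℝ) + 1) * (L : ℝ) + ((l : ℝ) + 1) - ((n : ℝ) + 1)) *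
              Gamma (α * (((l : ℝ) + 1) + μ)) *
              (-μ * rh ^ (-α)) ^ (l + 1) / (Nat.factorial (l + 1) : ℝ))|
      ≤ 1 / (((n : ℝ) + 1) * Gamma (α * μ)) * ∑ l ∈ Finset.range (n + 1),
          |deltaCoef α μ rh L (n - l)| * ((((n:ℝ)+1) * ((L:ℝ)+1)) *
              Gamma (α * (((l : ℝ) + 1) + μ)) *
              (μ * rh ^ (-α)) ^ (l + 1) / (Nat.factorial (l + 1) : ℝ)) := by
        apply mul_le_mul_of_nonneg_left _ (by positivity)
        refine le_trans (Finset.abs_sum_le_sum_abs _ _) (Finset.sum_le_sum ?_)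
        intro l hl
        have hln : (l:ℝ) ≤ (n:ℝ) := by
          have := Finset.mem_range.mp hl
          exact_mod_cast Nat.lt_succ_iff.mp this
        rw [abs_mul]
        apply mul_le_mul_of_nonneg_left _ (abs_nonneg _)
        rw [abs_div, abs_mul, abs_mul]
        have e1 : |(-μ * rh ^ (-α)) ^ (l + 1)| = (μ * rh ^ (-α)) ^ (l+1) := by
          rw [abs_pow, abs_mul, abs_neg, abs_of_pos hμ, abs_of_pos (by positivity : (0:ℝ) < rh ^ (-α))]
        have e2 : |Gamma (α * (((l : ℝ) + 1) + μ))| = Gamma (α * (((l : ℝ) + 1) + μ)) :=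
          abs_of_pos (Real.Gamma_pos_of_pos (by positivity))
        have e3 : |((Nat.factorial (l + 1) : ℝ))| = ((Nat.factorial (l + 1) : ℝ)) := by
          rw [abs_of_pos]; positivity
        rw [e1, e2, e3]
        apply div_le_div_of_nonneg_right _ (by positivity)
        apply mul_le_mul_of_nonneg_right _ (by positivity)
        apply mul_le_mul_of_nonneg_right _ (le_of_lt (Real.Gamma_pos_of_pos (by positivity)))
        rw [abs_le]
        have hL0 : (0:ℝ) ≤ (L:ℝ) := Nat.cast_nonneg L
        have hl0 : (0:ℝ) ≤ (l:ℝ) := Nat.cast_nonneg l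
        constructor <;> nlinarith
      _ = (((L:ℝ)+1) / Gamma (α*μ)) * ∑ l ∈ Finset.range (n+1),
          |deltaCoef α μ rh L (n-l)| * Gamma (α*((l:ℝ)+1) + α*μ) * (μ*rh^(-α))^(l+1) /
            (((l+1).factorial : ℝ)) := by
        rw [Finset.mul_sum, Finset.mul_sum]
        apply Finset.sum_congr rfl
        intro l hl
        have e4 : α * (((l : ℝ) + 1) + μ) = α*((l:ℝ)+1) + α*μ := by ring
        rw [e4]
        have hnn : ((n:ℝ)+1) ≠ 0 := by positivity
        field_simp

/-- The main growth bound on the coefficients. -/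
lemma delta_bound {α μ rh : ℝ} {L : ℕ} (hα : 0 < α) (hμ : 0 < μ) (hrh : 0 < rh) (hL : 1 ≤ L) :
    ∀ n : ℕ, |deltaCoef α μ rh L n| ≤
      (Gamma (α*μ) ^ L / Gamma (α*μ)) *
      (4 * (μ*rh^(-α)) * ((max (1/(α*μ)) (2/α)) ^ (min α 1) * (1+1/μ) ^ α * (1+α+α*μ) * ((α*μ+1)/(α*μ))) * ((L:ℝ)+1)) ^ n *
      Gamma (α*(n:ℝ) + α*μ) / ((n.factorial : ℝ)) ^ (min α 1) := by
  set m := α*μ with hm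
  set β := min α 1 with hβ
  set Q := (max (1/(α*μ)) (2/α)) ^ (min α 1) * (1+1/μ) ^ α * (1+α+α*μ) * ((α*μ+1)/(α*μ)) with hQ
  set c := μ*rh^(-α) with hc
  set K := 4 * c * Q * ((L:ℝ)+1) with hK
  set M := Gamma (α*μ) ^ L / Gamma (α*μ) with hM
  have hm0 : 0 < m := by positivity
  have hGm : 0 < Gamma m := Real.Gamma_pos_of_pos hm0
  have hβ0 : 0 < β := lt_min hα one_pos
  have hQ0 : 0 < Q := by
    have h1 : (0:ℝ) < max (1/(α*μ)) (2/α) := lt_of_lt_of_le (by positivity) (le_max_left _ _)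
    have h2 : (0:ℝ) < (max (1/(α*μ)) (2/α)) ^ (min α 1) := Real.rpow_pos_of_pos h1 _
    have h3 : (0:ℝ) < (1+1/μ) ^ α := Real.rpow_pos_of_pos (by positivity) _
    rw [hQ]; positivity
  have hc0 : 0 < c := by positivity
  have hL1 : (0:ℝ) < (L:ℝ)+1 := by positivity
  have hK0 : 0 < K := by rw [hK]; positivity
  have hM0 : 0 < M := by rw [hM]; positivity
  have hq : c * Q / K = 1/(4*((L:ℝ)+1)) := by
    rw [hK]; field_simp
  have hq0 : 0 < c*Q/K := by positivity
  have hq1 : c*Q/K ≤ 1/2 := by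
    rw [hq]; rw [div_le_div_iff₀ (by positivity) (by norm_num)]; nlinarith
  intro n
  induction n using Nat.strong_induction_on with
  | _ n ih =>
    match n with
    | 0 =>
      rw [deltaCoef, hM, ← hm]
      simp only [Nat.cast_zero, mul_zero, zero_add, pow_zero, Nat.factorial_zero,
        Nat.cast_one, Real.one_rpow, one_mul, div_one]
      rw [abs_of_pos (pow_pos hGm L), mul_one, div_mul_cancel₀ _ (ne_of_gt hGm)]
    | (n+1) =>
      have hrec := rec_bound (L := L) hα hμ hrh n
      have hsum : ∑ l ∈ Finset.range (n+1),
            |deltaCoef α μ rh L (n-l)| * Gamma (α*((l:ℝ)+1) + α*μ) * (μ*rh^(-α))^(l+1) /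
              (((l+1).factorial : ℝ))
          ≤ ∑ l ∈ Finset.range (n+1),
            M * (Gamma m * ((c*Q/K)^(l+1) * (K^(n+1) * Gamma (α*((n:ℝ)+1) + m) / (((n+1).factorial : ℝ))^β))) := by
        apply Finset.sum_le_sum
        intro l hl
        have hll : l ≤ n := Nat.lt_succ_iff.mp (Finset.mem_range.mp hl)
        have ihl := ih (n-l) (by omega)
        -- key instance
        have hkey := key hα hμ (l+1) (n+1) (by omega)
        have hsub : (n+1)-(l+1) = n-l := by omega
        rw [hsub] at hkey
        push_cast at hkey
        -- abbreviations
        have hG1 : 0 < Gamma (α*((n-l : ℕ):ℝ) + m) := Real.Gamma_pos_of_pos (by positivity)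
        have hG2 : 0 < Gamma (α*((l:ℝ)+1) + m) := Real.Gamma_pos_of_pos (by positivity)
        have hGN : 0 < Gamma (α*((n:ℝ)+1) + m) := Real.Gamma_pos_of_pos (by positivity)
        have hF1 : (0:ℝ) < (((n-l : ℕ).factorial : ℝ))^β := Real.rpow_pos_of_pos (by positivity) _
        have hF2 : (0:ℝ) < (((l+1).factorial : ℝ)) := by positivity
        have hFN : (0:ℝ) < (((n+1).factorial : ℝ))^β := Real.rpow_pos_of_pos (by positivity) _
        have core : Gamma (α*((n-l : ℕ):ℝ) + m) * Gamma (α*((l:ℝ)+1) + m) /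
              ((((n-l : ℕ).factorial : ℝ))^β * (((l+1).factorial : ℝ)))
            ≤ Gamma m * Q^(l+1) * Gamma (α*((n:ℝ)+1) + m) / ((((n+1).factorial : ℝ))^β) := by
          rw [div_le_div_iff₀ (by positivity) hFN]
          calc Gamma (α*((n-l : ℕ):ℝ) + m) * Gamma (α*((l:ℝ)+1) + m) * (((n+1).factorial : ℝ))^β
              = (((n+1).factorial : ℝ))^β * (Gamma (α*((n-l : ℕ):ℝ) + m) * Gamma (α*((l:ℝ)+1) + m)) := by
                ring
            _ ≤ Gamma m * (Q^(l+1) * (((l+1).factorial : ℝ) *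
                  (Gamma (α*((n:ℝ)+1) + m) * (((n-l : ℕ).factorial : ℝ))^β))) := by
                convert hkey using 3 <;> push_cast <;> ring_nf
            _ = Gamma m * Q^(l+1) * Gamma (α*((n:ℝ)+1) + m) *
                  ((((n-l : ℕ).factorial : ℝ))^β * (((l+1).factorial : ℝ))) := by ring
        calc |deltaCoef α μ rh L (n-l)| * Gamma (α*((l:ℝ)+1) + α*μ) * (μ*rh^(-α))^(l+1) /
              (((l+1).factorial : ℝ))
            ≤ (M * K^(n-l) * Gamma (α*((n-l : ℕ):ℝ) + m) / (((n-l : ℕ).factorial : ℝ))^β) *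
              Gamma (α*((l:ℝ)+1) + m) * c^(l+1) / (((l+1).factorial : ℝ)) := by
              apply div_le_div_of_nonneg_right _ hF2.le
              apply mul_le_mul_of_nonneg_right _ (le_of_lt (pow_pos hc0 _))
              exact mul_le_mul_of_nonneg_right ihl (le_of_lt hG2)
          _ = (M * K^(n-l) * c^(l+1)) * (Gamma (α*((n-l : ℕ):ℝ) + m) * Gamma (α*((l:ℝ)+1) + m) /
                ((((n-l : ℕ).factorial : ℝ))^β * (((l+1).factorial : ℝ)))) := by
              field_simp
          _ ≤ (M * K^(n-l) * c^(l+1)) * (Gamma m * Q^(l+1) * Gamma (α*((n:ℝ)+1) + m) /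
                ((((n+1).factorial : ℝ))^β)) := by
              apply mul_le_mul_of_nonneg_left core (by positivity)
          _ = M * (Gamma m * ((c*Q/K)^(l+1) * (K^(n+1) * Gamma (α*((n:ℝ)+1) + m) / (((n+1).factorial : ℝ))^β))) := by
              have hKe : K^(n+1) = K^(n-l) * K^(l+1) := by
                rw [← pow_add]; congr 1; omega
              have hqq : (c*Q/K)^(l+1) * K^(n+1) = c^(l+1) * (Q^(l+1) * K^(n-l)) := by
                rw [div_pow, hKe, mul_pow c Q]
                have hKl : (K:ℝ)^(l+1) ≠ 0 := ne_of_gt (pow_pos hK0 _)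
                field_simp
              rw [show (c*Q/K)^(l+1) * (K^(n+1) * Gamma (α*((n:ℝ)+1) + m) / (((n+1).factorial : ℝ))^β)
                  = ((c*Q/K)^(l+1) * K^(n+1)) * Gamma (α*((n:ℝ)+1) + m) / (((n+1).factorial : ℝ))^β from by ring, hqq]
              ring
      -- geometric sum
      have hgeo : ∑ l ∈ Finset.range (n+1), (c*Q/K)^(l+1) ≤ 2 * (c*Q/K) := by
        have hlt1 : c*Q/K < 1 := lt_of_le_of_lt hq1 (by norm_num)
        have e : ∀ l, (c*Q/K)^(l+1) = (c*Q/K) * (c*Q/K)^l := fun l => by ring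
        calc ∑ l ∈ Finset.range (n+1), (c*Q/K)^(l+1)
            = (c*Q/K) * ∑ l ∈ Finset.range (n+1), (c*Q/K)^l := by
              rw [Finset.mul_sum]; exact Finset.sum_congr rfl (fun l _ => e l)
          _ ≤ (c*Q/K) * 2 := by
              apply mul_le_mul_of_nonneg_left _ (le_of_lt hq0)
              calc ∑ l ∈ Finset.range (n+1), (c*Q/K)^l
                  ≤ ∑' l : ℕ, (c*Q/K)^l := by
                    apply Summable.sum_le_tsum _ (fun i _ => le_of_lt (pow_pos hq0 i))
                    exact summable_geometric_of_lt_one (le_of_lt hq0) hlt1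
                _ = (1 - c*Q/K)⁻¹ := tsum_geometric_of_lt_one (le_of_lt hq0) hlt1
                _ ≤ 2 := by
                    rw [inv_le_comm₀ (by linarith) (by norm_num)]
                    linarith
          _ = 2 * (c*Q/K) := by ring
      -- combine
      have hGN : 0 < Gamma (α*((n:ℝ)+1) + m) := Real.Gamma_pos_of_pos (by positivity)
      have hFN : (0:ℝ) < (((n+1).factorial : ℝ))^β := Real.rpow_pos_of_pos (by positivity) _
      calc |deltaCoef α μ rh L (n+1)|
          ≤ (((L:ℝ)+1) / Gamma (α*μ)) * ∑ l ∈ Finset.range (n+1),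
              |deltaCoef α μ rh L (n-l)| * Gamma (α*((l:ℝ)+1) + α*μ) * (μ*rh^(-α))^(l+1) /
                (((l+1).factorial : ℝ)) := hrec
        _ ≤ (((L:ℝ)+1) / Gamma (α*μ)) * ∑ l ∈ Finset.range (n+1),
              M * (Gamma m * ((c*Q/K)^(l+1) * (K^(n+1) * Gamma (α*((n:ℝ)+1) + m) / (((n+1).factorial : ℝ))^β))) := by
            apply mul_le_mul_of_nonneg_left hsum (by positivity)
        _ = (((L:ℝ)+1) * M * (K^(n+1) * Gamma (α*((n:ℝ)+1) + m) / (((n+1).factorial : ℝ))^β)) *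
              ∑ l ∈ Finset.range (n+1), (c*Q/K)^(l+1) := by
            rw [Finset.mul_sum, Finset.mul_sum]
            apply Finset.sum_congr rfl
            intro l _
            have hdm : ((L:ℝ)+1)/Gamma (α*μ) * Gamma m = (L:ℝ)+1 := by
              rw [← hm]; exact div_mul_cancel₀ _ (ne_of_gt hGm)
            calc (((L:ℝ)+1) / Gamma (α*μ)) * (M * (Gamma m * ((c*Q/K)^(l+1) * (K^(n+1) * Gamma (α*((n:ℝ)+1) + m) / (((n+1).factorial : ℝ))^β))))
                = (((L:ℝ)+1)/Gamma (α*μ) * Gamma m) * (M * ((c*Q/K)^(l+1) * (K^(n+1) * Gamma (α*((n:ℝ)+1) + m) / (((n+1).factorial : ℝ))^β))) := by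
                  ring
              _ = (((L:ℝ)+1) * M * (K^(n+1) * Gamma (α*((n:ℝ)+1) + m) / (((n+1).factorial : ℝ))^β)) * (c*Q/K)^(l+1) := by
                  rw [hdm]; ring
        _ ≤ (((L:ℝ)+1) * M * (K^(n+1) * Gamma (α*((n:ℝ)+1) + m) / (((n+1).factorial : ℝ))^β)) * (2 * (c*Q/K)) := by
            apply mul_le_mul_of_nonneg_left hgeo (by positivity)
        _ ≤ M * K^(n+1) * Gamma (α*((n:ℝ)+1) + m) / (((n+1).factorial : ℝ))^β := by
            rw [hq]
            have expand : (((L:ℝ)+1) * M * (K^(n+1) * Gamma (α*((n:ℝ)+1) + m) / (((n+1).factorial : ℝ))^β)) * (2 * (1/(4*((L:ℝ)+1))))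
                = (M * K^(n+1) * Gamma (α*((n:ℝ)+1) + m) / (((n+1).factorial : ℝ))^β) * (1/2) := by
              field_simp
              ring
            rw [expand]
            have hpos : 0 < M * K^(n+1) * Gamma (α*((n:ℝ)+1) + m) / (((n+1).factorial : ℝ))^β := by
              positivity
            linarith
        _ = M * K^(n+1) * Gamma (α*((n+1:ℕ):ℝ) + α*μ) / (((n+1).factorial : ℝ))^β := by
            push_cast
            rw [← hm]

/-- Monotonicity of Gamma past 2. -/
lemma Gamma_le_Gamma_add {x s : ℝ} (hx : 2 ≤ x) (hs : 0 ≤ s) : Gamma x ≤ Gamma (x + s) := by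
  rcases eq_or_lt_of_le hs with h | h
  · rw [← h, add_zero]
  have hx0 : (0:ℝ) < x := by linarith
  have hslope := logGamma_slope (by norm_num : (0:ℝ) < 1) (by linarith : (1:ℝ) ≤ x)
      (by norm_num : (1:ℝ) < 2) (by linarith : x < x + s) (by linarith : (2:ℝ) ≤ x + s)
  rw [Real.Gamma_two, Real.Gamma_one, Real.log_one] at hslope
  have h0 : (0:ℝ) ≤ (log (Gamma (x+s)) - log (Gamma x)) / (x + s - x) := by
    calc (0:ℝ) = (0 - 0)/(2-1) := by norm_num
      _ ≤ _ := hslope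
  have hss : 0 < x + s - x := by linarith
  have : 0 ≤ log (Gamma (x+s)) - log (Gamma x) := by
    by_contra hcon
    push_neg at hcon
    have := div_neg_of_neg_of_pos hcon hss
    linarith
  have hGx : 0 < Gamma x := Real.Gamma_pos_of_pos hx0
  have hGxs : 0 < Gamma (x+s) := Real.Gamma_pos_of_pos (by linarith)
  calc Gamma x = exp (log (Gamma x)) := (Real.exp_log hGx).symm
    _ ≤ exp (log (Gamma (x+s))) := Real.exp_le_exp.mpr (by linarith)
    _ = Gamma (x+s) := Real.exp_log hGxs

/-- Uniform comparison of `Γ(αn+αμ)` with `Γ(αn+αμL)`. -/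
lemma gamma_ratio_bound {α μ : ℝ} (hα : 0 < α) (hμ : 0 < μ) {L : ℕ} (hL : 1 ≤ L) :
    ∃ C : ℝ, 0 < C ∧ ∀ n : ℕ, Gamma (α*(n:ℝ)+α*μ) ≤ C * Gamma (α*(n:ℝ)+α*μ*(L:ℝ)) := by
  have hL1 : (1:ℝ) ≤ (L:ℝ) := by exact_mod_cast hL
  have hpos2 : ∀ n : ℕ, (0:ℝ) < α*(n:ℝ)+α*μ*(L:ℝ) := by
    intro n
    have : (0:ℝ) < α*μ*(L:ℝ) :=
      mul_pos (mul_pos hα hμ) (lt_of_lt_of_le zero_lt_one hL1)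
    have h2 : (0:ℝ) ≤ α*(n:ℝ) := by positivity
    linarith
  have hpos1 : ∀ n : ℕ, (0:ℝ) < α*(n:ℝ)+α*μ := by
    intro n
    have h2 : (0:ℝ) ≤ α*(n:ℝ) := by positivity
    nlinarith
  set N := Nat.ceil ((2:ℝ)/α) with hN
  set C := 1 + ∑ i ∈ Finset.range N, Gamma (α*(i:ℝ)+α*μ)/Gamma (α*(i:ℝ)+α*μ*(L:ℝ)) with hC
  have htermnn : ∀ i : ℕ, (0:ℝ) ≤ Gamma (α*(i:ℝ)+α*μ)/Gamma (α*(i:ℝ)+α*μ*(L:ℝ)) := by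
    intro i
    have := Real.Gamma_pos_of_pos (hpos1 i)
    have := Real.Gamma_pos_of_pos (hpos2 i)
    positivity
  have hC1 : (1:ℝ) ≤ C := by
    rw [hC]
    have : (0:ℝ) ≤ ∑ i ∈ Finset.range N, Gamma (α*(i:ℝ)+α*μ)/Gamma (α*(i:ℝ)+α*μ*(L:ℝ)) :=
      Finset.sum_nonneg (fun i _ => htermnn i)
    linarith
  refine ⟨C, by linarith, ?_⟩
  intro n
  rcases lt_or_ge n N with hn | hn
  · have hsingle := Finset.single_le_sum (f := fun i : ℕ => Gamma (α*(i:ℝ)+α*μ)/Gamma (α*(i:ℝ)+α*μ*(L:ℝ)))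
      (fun i _ => htermnn i) (Finset.mem_range.mpr hn)
    have hdiv : Gamma (α*(n:ℝ)+α*μ)/Gamma (α*(n:ℝ)+α*μ*(L:ℝ)) ≤ C := by
      rw [hC]
      have : (0:ℝ) ≤ 1 := by norm_num
      linarith
    exact (div_le_iff₀ (Real.Gamma_pos_of_pos (hpos2 n))).mp hdiv
  · have hx2 : (2:ℝ) ≤ α*(n:ℝ)+α*μ := by
      have h1 : ((N:ℝ)) ≥ (2:ℝ)/α := Nat.le_ceil _
      have h2 : (n:ℝ) ≥ (N:ℝ) := by exact_mod_cast hn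
      have h3 : α*(n:ℝ) ≥ 2 := by
        rw [ge_iff_le, div_le_iff₀ hα] at h1
        nlinarith
      nlinarith
    have hs : (0:ℝ) ≤ α*μ*((L:ℝ)-1) :=
      mul_nonneg (le_of_lt (mul_pos hα hμ)) (by linarith)
    have := Gamma_le_Gamma_add hx2 hs
    rw [show α*(n:ℝ)+α*μ + α*μ*((L:ℝ)-1) = α*(n:ℝ)+α*μ*(L:ℝ) by ring] at this
    calc Gamma (α*(n:ℝ)+α*μ) ≤ Gamma (α*(n:ℝ)+α*μ*(L:ℝ)) := this
      _ ≤ C * Gamma (α*(n:ℝ)+α*μ*(L:ℝ)) := by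
          nlinarith [Real.Gamma_pos_of_pos (hpos2 n)]

lemma summable_pow_div_factorial_rpow {x b : ℝ} (hx : 0 < x) (hb : 0 < b) :
    Summable (fun n : ℕ => x^n / ((n.factorial:ℝ))^b) := by
  have hpos : ∀ n : ℕ, 0 < x^n / ((n.factorial:ℝ))^b := by
    intro n
    have h1 : (0:ℝ) < ((n.factorial:ℝ))^b := Real.rpow_pos_of_pos (by positivity) _
    positivity
  apply summable_of_ratio_test_tendsto_lt_one (l := 0) one_pos
  · filter_upwards with n
    exact ne_of_gt (hpos n)
  · have hEq : ∀ n : ℕ, ‖x^(n+1) / (((n+1).factorial:ℝ))^b‖ / ‖x^n / ((n.factorial:ℝ))^b‖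
        = x / ((n:ℝ)+1)^b := by
      intro n
      rw [Real.norm_of_nonneg (le_of_lt (hpos (n+1))), Real.norm_of_nonneg (le_of_lt (hpos n))]
      have hfs : (((n+1).factorial:ℝ)) = ((n:ℝ)+1) * ((n.factorial:ℝ)) := by
        rw [Nat.factorial_succ]; push_cast; ring
      rw [hfs, Real.mul_rpow (by positivity) (by positivity)]
      have h1 : (0:ℝ) < ((n.factorial:ℝ))^b := Real.rpow_pos_of_pos (by positivity) _
      have h2 : (0:ℝ) < ((n:ℝ)+1)^b := Real.rpow_pos_of_pos (by positivity) _
      have h3 : x^n ≠ 0 := ne_of_gt (pow_pos hx n)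
      field_simp
      ring
    have : Filter.Tendsto (fun n : ℕ => x / ((n:ℝ)+1)^b) Filter.atTop (nhds 0) := by
      apply Filter.Tendsto.div_atTop (tendsto_const_nhds)
      exact (tendsto_rpow_atTop hb).comp
        (Filter.tendsto_atTop_add_const_right Filter.atTop 1 tendsto_natCast_atTop_atTop)
    refine this.congr (fun n => ?_)
    exact (hEq n).symm

/-- Absolute convergence of the sum-PDF series. -/
theorem sum_pdf_series_abs_convergent
    (α μ rh : ℝ) (hα : 0 < α) (hμ : 0 < μ) (hrh : 0 < rh)
    (L : ℕ) (hL : 1 ≤ L) (r : ℝ) (hr : 0 < r) :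
    Summable (fun i : ℕ =>
      |deltaCoef α μ rh L i| * r ^ (α * (i : ℝ) + α * μ * (L : ℝ) - 1) /
        Real.Gamma (α * (i : ℝ) + α * μ * (L : ℝ))) := by
  obtain ⟨C, hC0, hC⟩ := gamma_ratio_bound hα hμ hL
  have hbd0 := delta_bound hα hμ hrh hL
  have hGm : 0 < Gamma (α*μ) := Real.Gamma_pos_of_pos (by positivity)
  set β := min α 1 with hβ
  have hβ0 : 0 < β := lt_min hα one_pos
  set M0 := Gamma (α*μ) ^ L / Gamma (α*μ) with hM0def
  set K0 := 4 * (μ*rh^(-α)) * ((max (1/(α*μ)) (2/α)) ^ (min α 1) * (1+1/μ) ^ α * (1+α+α*μ) * ((α*μ+1)/(α*μ))) * ((L:ℝ)+1) with hK0def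
  have hM0 : 0 < M0 := by rw [hM0def]; positivity
  have hK0 : 0 < K0 := by
    have h1 : (0:ℝ) < max (1/(α*μ)) (2/α) := lt_of_lt_of_le (by positivity) (le_max_left _ _)
    have h2 : (0:ℝ) < (max (1/(α*μ)) (2/α)) ^ (min α 1) := Real.rpow_pos_of_pos h1 _
    have h3 : (0:ℝ) < (1+1/μ) ^ α := Real.rpow_pos_of_pos (by positivity) _
    rw [hK0def]; positivity
  have hL1 : (1:ℝ) ≤ (L:ℝ) := by exact_mod_cast hL
  clear hβ hM0def hK0def
  clear_value β M0 K0
  have hposL : ∀ i : ℕ, (0:ℝ) < α*(i:ℝ)+α*μ*(L:ℝ) := by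
    intro i
    have h1 : (0:ℝ) < α*μ*(L:ℝ) := mul_pos (mul_pos hα hμ) (by linarith)
    have h2 : (0:ℝ) ≤ α*(i:ℝ) := by positivity
    linarith
  -- term-wise bound
  have hterm : ∀ i : ℕ,
      |deltaCoef α μ rh L i| * r ^ (α * (i : ℝ) + α * μ * (L : ℝ) - 1) /
        Gamma (α * (i : ℝ) + α * μ * (L : ℝ))
      ≤ (M0 * C * r ^ (α*μ*(L:ℝ) - 1)) * ((K0 * r^α)^i / ((i.factorial:ℝ))^β) := by
    intro i
    have hGL : 0 < Gamma (α*(i:ℝ)+α*μ*(L:ℝ)) := Real.Gamma_pos_of_pos (hposL i)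
    have hG1 : 0 < Gamma (α*(i:ℝ)+α*μ) := Real.Gamma_pos_of_pos (by positivity)
    have hfac : (0:ℝ) < ((i.factorial:ℝ))^β := Real.rpow_pos_of_pos (by positivity) _
    have hrp : (0:ℝ) < r ^ (α * (i : ℝ) + α * μ * (L : ℝ) - 1) := Real.rpow_pos_of_pos hr _
    have hd : |deltaCoef α μ rh L i| ≤ M0 * K0^i * (C * Gamma (α*(i:ℝ)+α*μ*(L:ℝ))) / ((i.factorial:ℝ))^β := by
      calc |deltaCoef α μ rh L i| ≤ M0 * K0^i * Gamma (α*(i:ℝ)+α*μ) / ((i.factorial:ℝ))^β := hbd0 i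
        _ ≤ M0 * K0^i * (C * Gamma (α*(i:ℝ)+α*μ*(L:ℝ))) / ((i.factorial:ℝ))^β := by
            apply div_le_div_of_nonneg_right _ hfac.le
            exact mul_le_mul_of_nonneg_left (hC i) (by positivity)
    have hsplit : r ^ (α * (i : ℝ) + α * μ * (L : ℝ) - 1) = (r^α)^i * r ^ (α*μ*(L:ℝ) - 1) := by
      rw [show α * (i : ℝ) + α * μ * (L : ℝ) - 1 = α * (i : ℝ) + (α * μ * (L : ℝ) - 1) by ring,
        Real.rpow_add hr, Real.rpow_mul (le_of_lt hr), Real.rpow_natCast]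
    calc |deltaCoef α μ rh L i| * r ^ (α * (i : ℝ) + α * μ * (L : ℝ) - 1) /
          Gamma (α * (i : ℝ) + α * μ * (L : ℝ))
        ≤ (M0 * K0^i * (C * Gamma (α*(i:ℝ)+α*μ*(L:ℝ))) / ((i.factorial:ℝ))^β) *
            r ^ (α * (i : ℝ) + α * μ * (L : ℝ) - 1) / Gamma (α * (i : ℝ) + α * μ * (L : ℝ)) := by
          apply div_le_div_of_nonneg_right _ hGL.le
          exact mul_le_mul_of_nonneg_right hd hrp.le
      _ = (M0 * C * r ^ (α*μ*(L:ℝ) - 1)) * ((K0 * r^α)^i / ((i.factorial:ℝ))^β) := by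
          rw [hsplit, mul_pow]
          field_simp
  -- summability
  have hxpos : 0 < K0 * r^α := mul_pos hK0 (Real.rpow_pos_of_pos hr α)
  have hg : Summable (fun i : ℕ => (K0 * r^α)^i / ((i.factorial:ℝ))^β) :=
    summable_pow_div_factorial_rpow hxpos hβ0
  apply Summable.of_nonneg_of_le _ hterm (hg.mul_left _)
  intro i
  have hGL : 0 < Gamma (α*(i:ℝ)+α*μ*(L:ℝ)) := Real.Gamma_pos_of_pos (hposL i)
  have hrp : (0:ℝ) < r ^ (α * (i : ℝ) + α * μ * (L : ℝ) - 1) := Real.rpow_pos_of_pos hr _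
  exact div_nonneg (mul_nonneg (abs_nonneg _) hrp.le) hGL.le
end

section
/- Let μ, r̂ > 0, 0 < α < 1, and let L ≥ 1 be an integer. Then for every integer i ≥ 1, the recursively defined coefficients satisfy |δ_i| < Γ(αμ)^L · (2·μ·L·Γ(α(1+μ))·r̂^{−α})^i. -/
open MeasureTheory Real


lemma gamma_le_one_of_mem (x : ℝ) (h1 : 1 ≤ x) (h2 : x ≤ 2) : Real.Gamma x ≤ 1 := by
  have h := Real.convexOn_Gamma.2 (Set.mem_Ioi.mpr one_pos) (Set.mem_Ioi.mpr two_pos)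
    (by linarith : (0:ℝ) ≤ 2 - x) (by linarith : (0:ℝ) ≤ x - 1) (by ring)
  simp only [smul_eq_mul] at h
  have hx : (2 - x) * 1 + (x - 1) * 2 = x := by ring
  rw [hx] at h
  rw [Real.Gamma_one, Real.Gamma_two] at h
  linarith

lemma pi_div_four_le_gamma_of_mem (x : ℝ) (h1 : 1 ≤ x) (h2 : x ≤ 2) :
    π / 4 ≤ Real.Gamma x := by
  have hx0 : (0:ℝ) < x := by linarith
  have hy0 : (0:ℝ) < 3 - x := by linarith
  have h := Real.convexOn_log_Gamma.2 (Set.mem_Ioi.mpr hx0) (Set.mem_Ioi.mpr hy0)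
    (by norm_num : (0:ℝ) ≤ 1/2) (by norm_num : (0:ℝ) ≤ 1/2) (by norm_num)
  simp only [smul_eq_mul, Function.comp_apply] at h
  have hmid : (1/2:ℝ) * x + 1/2 * (3 - x) = 3/2 := by ring
  rw [hmid] at h
  have hG32 : Real.Gamma (3/2) = Real.sqrt π / 2 := by
    have : (3/2 : ℝ) = 1/2 + 1 := by norm_num
    rw [this, Real.Gamma_add_one (by norm_num), Real.Gamma_one_half_eq]
    ring
  have hGx : 0 < Real.Gamma x := Real.Gamma_pos_of_pos hx0
  have hGy : 0 < Real.Gamma (3 - x) := Real.Gamma_pos_of_pos hy0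
  have hprod : π / 4 ≤ Real.Gamma x * Real.Gamma (3 - x) := by
    have h2' : Real.log (Real.Gamma (3/2)) ≤ Real.log (Real.Gamma x * Real.Gamma (3-x)) / 2 := by
      rw [Real.log_mul hGx.ne' hGy.ne']
      linarith
    have h3 : Real.Gamma (3/2) ≤ Real.sqrt (Real.Gamma x * Real.Gamma (3-x)) := by
      rw [← Real.exp_log (Real.Gamma_pos_of_pos (by norm_num : (0:ℝ) < 3/2)),
        ← Real.exp_log (Real.sqrt_pos.mpr (mul_pos hGx hGy)),
        Real.exp_le_exp, Real.log_sqrt (mul_pos hGx hGy).le]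
      exact h2'
    have h4 : Real.Gamma (3/2) ^ 2 ≤ Real.sqrt (Real.Gamma x * Real.Gamma (3-x)) ^ 2 :=
      pow_le_pow_left₀ (Real.Gamma_pos_of_pos (by norm_num : (0:ℝ) < 3/2)).le h3 2
    rw [Real.sq_sqrt (mul_pos hGx hGy).le] at h4
    have : Real.Gamma (3/2) ^ 2 = π / 4 := by
      rw [hG32]
      rw [div_pow, Real.sq_sqrt Real.pi_pos.le]
      norm_num
    linarith [h4]
  have hle : Real.Gamma (3 - x) ≤ 1 := gamma_le_one_of_mem _ (by linarith) (by linarith)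
  nlinarith [mul_le_mul_of_nonneg_left hle hGx.le]

lemma pi_div_four_le_gamma_aux : ∀ (n : ℕ) (x : ℝ), 1 ≤ x → x ≤ n + 2 → π / 4 ≤ Real.Gamma x := by
  intro n
  induction n with
  | zero => intro x h1 h2; exact pi_div_four_le_gamma_of_mem x h1 (by exact_mod_cast h2)
  | succ n ih =>
    intro x h1 h2
    by_cases hx : x ≤ n + 2
    · exact ih x h1 hx
    · push_neg at hx
      have hx1 : 1 ≤ x - 1 := by
        have hn0 : (0:ℝ) ≤ (n:ℝ) := Nat.cast_nonneg n
        have : (1:ℝ) ≤ (n:ℝ) + 1 := by linarith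
        linarith
      have hG : Real.Gamma x = (x - 1) * Real.Gamma (x - 1) := by
        have := Real.Gamma_add_one (s := x - 1) (by linarith)
        simpa using this
      have hrec := ih (x - 1) hx1 (by push_cast at h2 ⊢; linarith)
      rw [hG]
      calc π / 4 ≤ Real.Gamma (x-1) := hrec
        _ ≤ (x-1) * Real.Gamma (x-1) := le_mul_of_one_le_left (Real.Gamma_pos_of_pos (by linarith)).le hx1

lemma pi_div_four_le_gamma (x : ℝ) (hx : 0 < x) : π / 4 ≤ Real.Gamma x := by
  rcases le_or_gt 1 x with h1 | h1
  · obtain ⟨n, hn⟩ := exists_nat_ge x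
    exact pi_div_four_le_gamma_aux n x h1 (by push_cast; linarith)
  · have h2 : Real.Gamma (x + 1) = x * Real.Gamma x := Real.Gamma_add_one hx.ne'
    have h3 : π / 4 ≤ Real.Gamma (x + 1) := by
      obtain ⟨n, hn⟩ := exists_nat_ge x
      exact pi_div_four_le_gamma_aux n (x+1) (by linarith) (by push_cast; linarith)
    have h4 : x * Real.Gamma x ≤ Real.Gamma x :=
      mul_le_of_le_one_left (Real.Gamma_pos_of_pos hx).le h1.le
    linarith

lemma le_four_gamma (a : ℝ) (ha : 0 < a) : a ≤ 4 * Real.Gamma a := by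
  rcases le_or_gt a 2 with h | h
  · have := pi_div_four_le_gamma a ha
    nlinarith [Real.pi_gt_three]
  · have ha1 : (0:ℝ) < a - 1 := by linarith
    have hG : Real.Gamma a = (a - 1) * Real.Gamma (a - 1) := by
      have := Real.Gamma_add_one (s := a - 1) ha1.ne'
      simpa using this
    have := pi_div_four_le_gamma (a-1) ha1
    nlinarith [Real.pi_gt_three]

lemma gamma_convex_step (x s : ℝ) (hx : 0 < x) (hs0 : 0 ≤ s) (hs1 : s ≤ 1) :
    Real.Gamma (x + s) ≤ Real.Gamma x * max 1 x := by
  have h := Real.convexOn_Gamma.2 (Set.mem_Ioi.mpr hx)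
    (Set.mem_Ioi.mpr (by linarith : (0:ℝ) < x + 1))
    (by linarith : (0:ℝ) ≤ 1 - s) hs0 (by ring)
  simp only [smul_eq_mul] at h
  have hxs : (1 - s) * x + s * (x + 1) = x + s := by ring
  rw [hxs] at h
  have hG1 : Real.Gamma (x + 1) = x * Real.Gamma x := Real.Gamma_add_one hx.ne'
  rw [hG1] at h
  have hGx : 0 < Real.Gamma x := Real.Gamma_pos_of_pos hx
  have : (1 - s) * Real.Gamma x + s * (x * Real.Gamma x) = Real.Gamma x * ((1-s) * 1 + s * x) := by ring
  rw [this] at h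
  have hcomb : (1-s) * 1 + s * x ≤ max 1 x := by
    have h1 := le_max_left (1:ℝ) x
    have h2 := le_max_right (1:ℝ) x
    nlinarith [mul_nonneg (by linarith : (0:ℝ) ≤ 1 - s) (by linarith : (0:ℝ) ≤ max 1 x - 1),
      mul_nonneg hs0 (by linarith : (0:ℝ) ≤ max 1 x - x)]
  calc Real.Gamma (x + s) ≤ Real.Gamma x * ((1-s)*1 + s*x) := h
    _ ≤ Real.Gamma x * max 1 x := by nlinarith [le_max_left (1:ℝ) x]

lemma key_gamma_bound (α μ : ℝ) (hμ : 0 < μ) (hα0 : 0 < α) (hα1 : α < 1) :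
    ∀ l : ℕ, 1 ≤ l →
      Real.Gamma (α * ((l : ℝ) + μ)) ≤
        (2 / π) * Real.Gamma (α * μ) * 2 ^ l * (Nat.factorial l : ℝ) *
          Real.Gamma (α * (1 + μ)) ^ l := by
  have hπ := Real.pi_pos
  have ha : 0 < α * (1 + μ) := by nlinarith
  have hGa : 0 < Real.Gamma (α * (1 + μ)) := Real.Gamma_pos_of_pos ha
  have hGμ : 0 < Real.Gamma (α * μ) := Real.Gamma_pos_of_pos (by nlinarith)
  have hGμ4 : π / 4 ≤ Real.Gamma (α * μ) := pi_div_four_le_gamma _ (by nlinarith)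
  have hGa4 : π / 4 ≤ Real.Gamma (α * (1 + μ)) := pi_div_four_le_gamma _ ha
  have hπ3 := Real.pi_gt_three
  intro l hl
  induction l with
  | zero => omega
  | succ n ih =>
    rcases Nat.eq_or_lt_of_le hl with h1 | h1
    · -- n + 1 = 1, i.e. n = 0
      have hn : n = 0 := by omega
      subst hn
      norm_num
      have : (1:ℝ) ≤ (2 / π) * Real.Gamma (α * μ) * 2 := by
        have heq : (2 / π) * (π / 4) * 2 = 1 := by field_simp; norm_num
        calc (1:ℝ) = (2 / π) * (π / 4) * 2 := heq.symm
          _ ≤ (2 / π) * Real.Gamma (α * μ) * 2 := by gcongr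
      calc Real.Gamma (α * ((1:ℝ) + μ)) = Real.Gamma (α * (1 + μ)) * 1 := by ring
        _ ≤ Real.Gamma (α * (1 + μ)) * ((2 / π) * Real.Gamma (α * μ) * 2) := by
            exact mul_le_mul_of_nonneg_left this hGa.le
        _ = 2 / π * Real.Gamma (α * μ) * 2 * Real.Gamma (α * (1 + μ)) := by ring
    · -- n ≥ 1
      have hn1 : 1 ≤ n := by omega
      have ihn := ih hn1
      have hx : 0 < α * ((n : ℝ) + μ) := by
        have : (0:ℝ) ≤ (n:ℝ) := Nat.cast_nonneg n
        nlinarith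
      have hstep : Real.Gamma (α * (((n:ℝ) + 1) + μ)) ≤
          Real.Gamma (α * ((n:ℝ) + μ)) * max 1 (α * ((n:ℝ) + μ)) := by
        have heq : α * (((n:ℝ) + 1) + μ) = α * ((n:ℝ) + μ) + α := by ring
        rw [heq]
        exact gamma_convex_step _ _ hx hα0.le hα1.le
      have hmax : max 1 (α * ((n:ℝ) + μ)) ≤ 2 * ((n:ℝ) + 1) * Real.Gamma (α * (1 + μ)) := by
        have hn0 : (1:ℝ) ≤ (n:ℝ) := by exact_mod_cast hn1
        have h4a := le_four_gamma _ ha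
        apply max_le
        · nlinarith
        · -- α(n+μ) = α(1+μ) + α(n−1) ≤ a + (n−1) ≤ 4Γa + n − 1 ≤ 2(n+1)Γa
          have h1' : α * ((n:ℝ) + μ) ≤ α * (1 + μ) + ((n:ℝ) - 1) := by nlinarith
          nlinarith
      have hpos : (0:ℝ) ≤ Real.Gamma (α * ((n:ℝ) + μ)) := (Real.Gamma_pos_of_pos hx).le
      calc Real.Gamma (α * ((↑(n+1) : ℝ) + μ))
          = Real.Gamma (α * (((n:ℝ) + 1) + μ)) := by push_cast; ring_nf
        _ ≤ Real.Gamma (α * ((n:ℝ) + μ)) * max 1 (α * ((n:ℝ) + μ)) := hstep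
        _ ≤ ((2 / π) * Real.Gamma (α * μ) * 2 ^ n * (Nat.factorial n : ℝ) *
              Real.Gamma (α * (1 + μ)) ^ n) * (2 * ((n:ℝ) + 1) * Real.Gamma (α * (1 + μ))) := by
            apply mul_le_mul ihn hmax (le_trans zero_le_one (le_max_left _ _)) (by positivity)
        _ = (2 / π) * Real.Gamma (α * μ) * 2 ^ (n+1) * (Nat.factorial (n+1) : ℝ) *
              Real.Gamma (α * (1 + μ)) ^ (n+1) := by
            rw [Nat.factorial_succ]
            push_cast
            ring


open PowerSeries Finset in
lemma miller (c : ℕ → ℝ) (L : ℕ) (hL : 1 ≤ L) (i : ℕ) :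
    ((i:ℝ)+1) * c 0 * (coeff (R := ℝ) (i+1) ((mk c)^L)) =
      ∑ l ∈ range (i+1),
        ((((l:ℝ)+1)*(L:ℝ) + ((l:ℝ)+1) - ((i:ℝ)+1)) * c (l+1)) *
          coeff (R := ℝ) (i-l) ((mk c)^L) := by
  have hid : (mk c) * (d⁄dX ℝ ((mk c)^L)) = (L:ℕ) • (((mk c)^L) * d⁄dX ℝ (mk c)) := by
    rw [Derivation.leibniz_pow, mul_smul_comm, smul_eq_mul, ← mul_assoc, ← pow_succ',
      Nat.sub_add_cancel hL]
  have hco := congrArg (coeff (R := ℝ) i) hid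
  rw [map_nsmul, coeff_mul, coeff_mul, Finset.Nat.sum_antidiagonal_eq_sum_range_succ_mk,
    Finset.Nat.sum_antidiagonal_eq_sum_range_succ_mk] at hco
  simp only [coeff_mk, coeff_derivative, nsmul_eq_mul] at hco
  -- hco : ∑ k ∈ range (i+1), c k * (coeff (R := ℝ) (i-k+1) ((mk c)^L) * ((i-k:ℕ)+1))
  --      = L * ∑ k ∈ range (i+1), coeff (R := ℝ) k ((mk c)^L) * (c (i-k+1) * ((i-k:ℕ)+1))
  have hB : ∑ k ∈ range (i+1), coeff (R := ℝ) k ((mk c)^L) * (c (i-k+1) * (((i-k:ℕ):ℝ)+1))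
      = ∑ l ∈ range (i+1), coeff (R := ℝ) (i-l) ((mk c)^L) * (c (l+1) * (((l:ℕ):ℝ)+1)) := by
    rw [← Finset.sum_range_reflect]
    refine Finset.sum_congr rfl fun j hj => ?_
    have hji : j ≤ i := by simpa [Nat.lt_succ_iff] using hj
    have h1 : i + 1 - 1 - j = i - j := by omega
    have h2 : i - (i - j) = j := by omega
    rw [h1, h2]
  have hC : ∑ k ∈ range (i+1), c k * (coeff (R := ℝ) (i-k+1) ((mk c)^L) * (((i-k:ℕ):ℝ)+1))
      = c 0 * (coeff (R := ℝ) (i+1) ((mk c)^L) * (((i:ℕ):ℝ)+1))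
        + ∑ l ∈ range (i+1), c (l+1) * (coeff (R := ℝ) (i-l) ((mk c)^L) * ((i-l:ℕ):ℝ)) := by
    rw [Finset.sum_range_succ' (fun k => c k * (coeff (R := ℝ) (i-k+1) ((mk c)^L) * (((i-k:ℕ):ℝ)+1))) i]
    have hlast : ∑ l ∈ range (i+1), c (l+1) * (coeff (R := ℝ) (i-l) ((mk c)^L) * ((i-l:ℕ):ℝ))
        = ∑ l ∈ range i, c (l+1) * (coeff (R := ℝ) (i-l) ((mk c)^L) * ((i-l:ℕ):ℝ)) := by
      rw [Finset.sum_range_succ]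
      simp
    rw [hlast]
    have : ∀ l ∈ range i, c (l+1) * (coeff (R := ℝ) (i-(l+1)+1) ((mk c)^L) * (((i-(l+1):ℕ):ℝ)+1))
        = c (l+1) * (coeff (R := ℝ) (i-l) ((mk c)^L) * ((i-l:ℕ):ℝ)) := by
      intro l hl
      have hli : l < i := Finset.mem_range.mp hl
      have h1 : i - (l+1) + 1 = i - l := by omega
      have h2 : (((i-(l+1):ℕ):ℝ)+1) = ((i-l:ℕ):ℝ) := by
        have : (i-(l+1)) + 1 = i - l := by omega
        rw [← this]
        push_cast
        ring
      rw [h1, h2]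
    rw [Finset.sum_congr rfl this]
    simp [Nat.sub_self]
    ring
  rw [hC, hB] at hco
  have htarget : ∀ l ∈ range (i+1),
      ((((l:ℝ)+1)*(L:ℝ) + ((l:ℝ)+1) - ((i:ℝ)+1)) * c (l+1)) * coeff (R := ℝ) (i-l) ((mk c)^L)
      = (L:ℝ) * (coeff (R := ℝ) (i-l) ((mk c)^L) * (c (l+1) * (((l:ℕ):ℝ)+1)))
        - c (l+1) * (coeff (R := ℝ) (i-l) ((mk c)^L) * ((i-l:ℕ):ℝ)) := by
    intro l hl
    have hli : l ≤ i := by simpa [Nat.lt_succ_iff] using hl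
    have hcast : ((i-l:ℕ):ℝ) = (i:ℝ) - (l:ℝ) := by
      rw [Nat.cast_sub hli]
    rw [hcast]
    ring
  rw [Finset.sum_congr rfl htarget, Finset.sum_sub_distrib, ← Finset.mul_sum]
  rw [← hco]
  push_cast
  ring

lemma geom_sum_le_pow (M i : ℕ) :
    ∑ m ∈ Finset.range (i+1), ((M:ℝ))^m ≤ ((M:ℝ)+1)^i := by
  induction i with
  | zero => simp
  | succ n ih =>
    rw [Finset.sum_range_succ' (fun m => ((M:ℝ))^m) (n+1)]
    have hM0 : (0:ℝ) ≤ (M:ℝ) := Nat.cast_nonneg M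
    have h1 : (1:ℝ) ≤ ((M:ℝ)+1)^n := one_le_pow₀ (by linarith)
    have h2 : ∑ m ∈ Finset.range (n+1), ((M:ℝ))^(m+1)
        = (M:ℝ) * ∑ m ∈ Finset.range (n+1), ((M:ℝ))^m := by
      rw [Finset.mul_sum]
      exact Finset.sum_congr rfl fun m _ => by ring
    rw [h2, pow_zero]
    have h3 : (M:ℝ) * ∑ m ∈ Finset.range (n+1), ((M:ℝ))^m ≤ (M:ℝ) * ((M:ℝ)+1)^n :=
      mul_le_mul_of_nonneg_left ih hM0
    have h4 : ((M:ℝ)+1)^(n+1) = (M:ℝ) * ((M:ℝ)+1)^n + ((M:ℝ)+1)^n := by ring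
    linarith

open PowerSeries Finset in
lemma coeff_pow_abs_le (c : ℕ → ℝ) (Γ0 K q : ℝ) (hΓ0 : 0 ≤ Γ0) (hK : 0 ≤ K)
    (hq0 : 0 ≤ q) (hq1 : q ≤ 1)
    (h0 : |c 0| ≤ Γ0) (hc : ∀ l : ℕ, 1 ≤ l → |c l| ≤ q * Γ0 * K^l) :
    ∀ (M i : ℕ), |coeff (R := ℝ) i ((mk c)^M)| ≤
      (if i = 0 then 1 else q) * Γ0^M * (M:ℝ)^i * K^i := by
  intro M
  induction M with
  | zero =>
    intro i
    rcases Nat.eq_zero_or_pos i with rfl | hi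
    · simp
    · rw [pow_zero, PowerSeries.coeff_one, if_neg hi.ne', if_neg hi.ne', abs_zero,
        Nat.cast_zero, zero_pow hi.ne']
      simp
  | succ M ih =>
    intro i
    have hstep : coeff (R := ℝ) i ((mk c)^(M+1)) =
        ∑ k ∈ range (i+1), c k * coeff (R := ℝ) (i-k) ((mk c)^M) := by
      rw [pow_succ', coeff_mul, Finset.Nat.sum_antidiagonal_eq_sum_range_succ_mk]
      simp only [coeff_mk]
    rcases Nat.eq_zero_or_pos i with rfl | hi
    · rw [hstep, Finset.sum_range_one, if_pos rfl]
      simp only [Nat.sub_zero, pow_zero, mul_one, one_mul]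
      rw [abs_mul]
      have h2 := ih 0
      rw [if_pos rfl] at h2
      simp only [pow_zero, mul_one, one_mul] at h2 ⊢
      calc |c 0| * |coeff (R := ℝ) 0 ((mk c)^M)| ≤ Γ0 * Γ0^M :=
            mul_le_mul h0 h2 (abs_nonneg _) hΓ0
        _ = Γ0^(M+1) := by ring
    · rw [hstep, if_neg hi.ne']
      have hterm : ∀ k ∈ range (i+1),
          |c k * coeff (R := ℝ) (i-k) ((mk c)^M)| ≤ q * Γ0^(M+1) * K^i * ((M:ℝ))^(i-k) := by
        intro k hk
        have hki : k ≤ i := by simpa [Nat.lt_succ_iff] using hk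
        rw [abs_mul]
        rcases Nat.eq_zero_or_pos k with rfl | hk1
        · have h2 := ih i
          rw [if_neg hi.ne'] at h2
          calc |c 0| * |coeff (R := ℝ) (i-0) ((mk c)^M)| ≤ Γ0 * (q * Γ0^M * (M:ℝ)^i * K^i) := by
                simpa using mul_le_mul h0 (by simpa using h2) (abs_nonneg _) hΓ0
            _ = q * Γ0^(M+1) * K^i * ((M:ℝ))^(i-0) := by
                simp only [Nat.sub_zero]; ring
        · have h2 := ih (i-k)
          have h2' : |coeff (R := ℝ) (i-k) ((mk c)^M)| ≤ Γ0^M * (M:ℝ)^(i-k) * K^(i-k) := by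
            calc |coeff (R := ℝ) (i-k) ((mk c)^M)| ≤
                (if i-k = 0 then 1 else q) * Γ0^M * (M:ℝ)^(i-k) * K^(i-k) := h2
              _ ≤ 1 * Γ0^M * (M:ℝ)^(i-k) * K^(i-k) := by
                  have : (if i-k = 0 then (1:ℝ) else q) ≤ 1 := by
                    split <;> [exact le_refl 1; exact hq1]
                  have hnn : (0:ℝ) ≤ Γ0^M * (M:ℝ)^(i-k) * K^(i-k) := by positivity
                  calc (if i-k = 0 then (1:ℝ) else q) * Γ0^M * (M:ℝ)^(i-k) * K^(i-k)
                      = (if i-k = 0 then (1:ℝ) else q) * (Γ0^M * (M:ℝ)^(i-k) * K^(i-k)) := by ring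
                    _ ≤ 1 * (Γ0^M * (M:ℝ)^(i-k) * K^(i-k)) :=
                        mul_le_mul_of_nonneg_right this hnn
                    _ = 1 * Γ0^M * (M:ℝ)^(i-k) * K^(i-k) := by ring
              _ = Γ0^M * (M:ℝ)^(i-k) * K^(i-k) := by ring
          have hck : |c k| ≤ q * Γ0 * K^k := hc k hk1
          calc |c k| * |coeff (R := ℝ) (i-k) ((mk c)^M)|
              ≤ (q * Γ0 * K^k) * (Γ0^M * (M:ℝ)^(i-k) * K^(i-k)) :=
                mul_le_mul hck h2' (abs_nonneg _) (by positivity)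
            _ = q * Γ0^(M+1) * (K^k * K^(i-k)) * ((M:ℝ))^(i-k) := by ring
            _ = q * Γ0^(M+1) * K^i * ((M:ℝ))^(i-k) := by
                rw [← pow_add, Nat.add_sub_cancel' hki]
      calc |∑ k ∈ range (i+1), c k * coeff (R := ℝ) (i-k) ((mk c)^M)|
          ≤ ∑ k ∈ range (i+1), |c k * coeff (R := ℝ) (i-k) ((mk c)^M)| :=
            Finset.abs_sum_le_sum_abs _ _
        _ ≤ ∑ k ∈ range (i+1), q * Γ0^(M+1) * K^i * ((M:ℝ))^(i-k) :=
            Finset.sum_le_sum hterm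
        _ = q * Γ0^(M+1) * K^i * ∑ k ∈ range (i+1), ((M:ℝ))^(i-k) := by
            rw [Finset.mul_sum]
        _ ≤ q * Γ0^(M+1) * K^i * ((M:ℝ)+1)^i := by
            have hsum : ∑ k ∈ range (i+1), ((M:ℝ))^(i-k)
                = ∑ k ∈ range (i+1), ((M:ℝ))^k := by
              rw [← Finset.sum_range_reflect (fun k => ((M:ℝ))^k) (i+1)]
              refine Finset.sum_congr rfl fun j hj => ?_
              have h : i + 1 - 1 - j = i - j := by omega
              rw [h]
            rw [hsum]
            exact mul_le_mul_of_nonneg_left (geom_sum_le_pow M i) (by positivity)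
        _ = q * Γ0^(M+1) * ((M+1:ℕ):ℝ)^i * K^i := by push_cast; ring

open PowerSeries Finset in
lemma delta_eq_coeff (α μ rh : ℝ) (hΓ : Real.Gamma (α*μ) ≠ 0) (L : ℕ) (hL : 1 ≤ L) :
    ∀ i, deltaCoef α μ rh L i =
      coeff (R := ℝ) i ((mk (fun l => Real.Gamma (α*((l:ℝ)+μ)) * (-μ*rh^(-α))^l /
        (Nat.factorial l : ℝ)))^L) := by
  set c : ℕ → ℝ := fun l => Real.Gamma (α*((l:ℝ)+μ)) * (-μ*rh^(-α))^l / (Nat.factorial l : ℝ)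
    with hc
  have hc0 : c 0 = Real.Gamma (α*μ) := by
    simp [hc]
  intro i
  induction i using Nat.strong_induction_on with
  | _ i ih =>
    match i with
    | 0 =>
      rw [deltaCoef, PowerSeries.coeff_zero_eq_constantCoeff_apply, map_pow,
        PowerSeries.constantCoeff_mk, hc0]
    | (i+1) =>
      rw [deltaCoef]
      have hsum : ∑ l ∈ Finset.range (i + 1),
          deltaCoef α μ rh L (i - l) *
            ((((l : ℝ) + 1) * (L : ℝ) + ((l : ℝ) + 1) - ((i : ℝ) + 1)) *
              Real.Gamma (α * (((l : ℝ) + 1) + μ)) *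
              (-μ * rh ^ (-α)) ^ (l + 1) / (Nat.factorial (l + 1) : ℝ))
          = ∑ l ∈ Finset.range (i+1),
            ((((l:ℝ)+1)*(L:ℝ) + ((l:ℝ)+1) - ((i:ℝ)+1)) * c (l+1)) *
              coeff (R := ℝ) (i-l) ((mk c)^L) := by
        refine Finset.sum_congr rfl fun l hl => ?_
        have hli : l < i + 1 := Finset.mem_range.mp hl
        rw [ih (i - l) (by omega)]
        have hcl : c (l+1) = Real.Gamma (α*(((l:ℝ)+1)+μ)) * (-μ*rh^(-α))^(l+1) /
            (Nat.factorial (l+1) : ℝ) := by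
          simp only [hc]
          push_cast
          ring_nf
        rw [hcl]
        ring
      rw [hsum]
      have hmil := miller c L hL i
      rw [hc0] at hmil
      have hne : ((i:ℝ)+1) * Real.Gamma (α*μ) ≠ 0 := by
        apply mul_ne_zero _ hΓ
        positivity
      field_simp
      have hs2 : ∑ x ∈ range (i + 1), (((x:ℝ) + 1) * ((L:ℝ) + 1) - ((i:ℝ) + 1)) * c (x + 1) * (coeff (R := ℝ) (i - x)) (PowerSeries.mk c ^ L)
          = ∑ l ∈ range (i+1), ((((l:ℝ)+1)*(L:ℝ) + ((l:ℝ)+1) - ((i:ℝ)+1)) * c (l+1)) * coeff (R := ℝ) (i-l) ((mk c)^L) :=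
        Finset.sum_congr rfl fun x _ => by ring
      linarith [hmil]

/-- Geometric bound on |δ_i| for 0 < α < 1. -/
theorem deltaCoef_abs_lt_of_alpha_lt_one
    (α μ rh : ℝ) (hμ : 0 < μ) (hrh : 0 < rh) (hα0 : 0 < α) (hα1 : α < 1)
    (L : ℕ) (hL : 1 ≤ L) (i : ℕ) (hi : 1 ≤ i) :
    |deltaCoef α μ rh L i| <
      Real.Gamma (α * μ) ^ L *
        (2 * μ * (L : ℝ) * Real.Gamma (α * (1 + μ)) * rh ^ (-α)) ^ i := by
  have hπ := Real.pi_pos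
  have hπ3 := Real.pi_gt_three
  have hGμ : 0 < Real.Gamma (α * μ) := Real.Gamma_pos_of_pos (by positivity)
  have hGa : 0 < Real.Gamma (α * (1 + μ)) := Real.Gamma_pos_of_pos (by positivity)
  have hrha : (0:ℝ) < rh ^ (-α) := Real.rpow_pos_of_pos hrh _
  set c : ℕ → ℝ := fun l => Real.Gamma (α*((l:ℝ)+μ)) * (-μ*rh^(-α))^l / (Nat.factorial l : ℝ)
    with hcdef
  set K : ℝ := 2 * μ * Real.Gamma (α * (1 + μ)) * rh ^ (-α) with hKdef
  have hK : 0 < K := by positivity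
  have hc0 : |c 0| ≤ Real.Gamma (α*μ) := by
    simp [hcdef, abs_of_pos hGμ]
  have hcl : ∀ l : ℕ, 1 ≤ l → |c l| ≤ (2/π) * Real.Gamma (α*μ) * K^l := by
    intro l hl
    have hGl : 0 < Real.Gamma (α*((l:ℝ)+μ)) := by
      apply Real.Gamma_pos_of_pos
      have : (0:ℝ) ≤ (l:ℝ) := Nat.cast_nonneg l
      nlinarith
    have habs : |c l| = Real.Gamma (α*((l:ℝ)+μ)) * (μ*rh^(-α))^l / (Nat.factorial l : ℝ) := by
      rw [hcdef]
      rw [abs_div, abs_mul, abs_pow, abs_of_pos hGl, abs_of_pos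
        (by positivity : (0:ℝ) < (Nat.factorial l : ℝ))]
      congr 2
      rw [abs_of_nonpos (by nlinarith : -μ*rh^(-α) ≤ 0)]
      ring
    rw [habs]
    have hkey := key_gamma_bound α μ hμ hα0 hα1 l hl
    have hfac : (0:ℝ) < (Nat.factorial l : ℝ) := by positivity
    rw [div_le_iff₀ hfac]
    have hKl : K^l = 2^l * Real.Gamma (α*(1+μ))^l * (μ*rh^(-α))^l := by
      rw [hKdef, ← mul_pow, ← mul_pow]
      congr 1
      ring
    rw [hKl]
    calc Real.Gamma (α*((l:ℝ)+μ)) * (μ*rh^(-α))^l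
        ≤ ((2 / π) * Real.Gamma (α * μ) * 2 ^ l * (Nat.factorial l : ℝ) *
            Real.Gamma (α * (1 + μ)) ^ l) * (μ*rh^(-α))^l := by
          apply mul_le_mul_of_nonneg_right hkey (by positivity)
      _ = 2 / π * Real.Gamma (α * μ) * (2 ^ l * Real.Gamma (α * (1 + μ)) ^ l *
            (μ * rh ^ (-α)) ^ l) * (Nat.factorial l : ℝ) := by ring
  have hbound := coeff_pow_abs_le c (Real.Gamma (α*μ)) K (2/π) hGμ.le hK.le
    (by positivity) (by rw [div_le_one hπ]; linarith) hc0 hcl L i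
  rw [if_neg (by omega : ¬ i = 0)] at hbound
  rw [delta_eq_coeff α μ rh hGμ.ne' L hL i]
  calc |PowerSeries.coeff (R := ℝ) i ((PowerSeries.mk c)^L)|
      ≤ 2/π * Real.Gamma (α*μ)^L * (L:ℝ)^i * K^i := hbound
    _ < Real.Gamma (α*μ)^L * ((L:ℝ)^i * K^i) := by
        have hLpos : (0:ℝ) < (L:ℝ) := by exact_mod_cast hL
        have hpos : (0:ℝ) < Real.Gamma (α*μ)^L * ((L:ℝ)^i * K^i) := by positivity
        have h2π : 2/π < 1 := by rw [div_lt_one hπ]; linarith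
        calc 2/π * Real.Gamma (α*μ)^L * (L:ℝ)^i * K^i
            = 2/π * (Real.Gamma (α*μ)^L * ((L:ℝ)^i * K^i)) := by ring
          _ < 1 * (Real.Gamma (α*μ)^L * ((L:ℝ)^i * K^i)) :=
              mul_lt_mul_of_pos_right h2π hpos
          _ = Real.Gamma (α*μ)^L * ((L:ℝ)^i * K^i) := by ring
    _ = Real.Gamma (α * μ) ^ L *
        (2 * μ * (L : ℝ) * Real.Gamma (α * (1 + μ)) * rh ^ (-α)) ^ i := by
        rw [hKdef]
        rw [← mul_pow]
        congr 2
        ring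
end
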